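/- arXiv:2307.08868 — 7 statements merged into one kernel-verified Lean document; each statement's English description precedes it below -/
import Mathlib

section
/- Let n ≥ 2, let (θ_{i,j})_{i,j≥1} be a coagulation kernel, and let f^n = (f_i^n)_{1≤i≤n} : I_max → ℝ^n be the unique maximal local solution of the truncated RBK system. If all components f_i^{n,in} of the initial datum are nonnegative, then all components f_i^n(t) of the solution are nonnegative for every t ∈ I_max, and moreover sup I_max = +∞, i.e. the solution is global in forward time. -/
open MeasureTheory Finset Filter

/-- `IsTruncRBKOn θ n I f` : the family `(f i)_{1 ≤ i ≤ n}` solves the truncated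
Redner–Ben-Avraham–Kahng coagulation system of size `n` with kernel `θ` on the set `I`:
`df_i/dt = ∑_{j=1}^{n-i} θ_{i+j,j} f_{i+j} f_j − ∑_{j=1}^{n} θ_{i,j} f_i f_j`. -/
def IsTruncRBKOn (θ : ℕ → ℕ → ℝ) (n : ℕ) (I : Set ℝ) (f : ℕ → ℝ → ℝ) : Prop :=
  ∀ i ∈ Finset.Icc 1 n, ∀ t ∈ I,
    HasDerivWithinAt (f i)
      ((∑ j ∈ Finset.Icc 1 (n - i), θ (i + j) j * f (i + j) t * f j t)
        - ∑ j ∈ Finset.Icc 1 n, θ i j * f i t * f j t) I t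
noncomputable section RBKaux

open Set Metric Real

namespace RBKaux

/-- clamp into `[0, M]` -/
def cl (M a : ℝ) : ℝ := min (max a 0) M

lemma cl_nonneg {M : ℝ} (hM : 0 ≤ M) (a : ℝ) : 0 ≤ cl M a :=
  le_min (le_max_right _ _) hM

lemma cl_le {M a : ℝ} : cl M a ≤ M := min_le_right _ _

lemma abs_cl_le {M : ℝ} (hM : 0 ≤ M) (a : ℝ) : |cl M a| ≤ M :=
  abs_le.2 ⟨by linarith [cl_nonneg hM a], cl_le⟩

lemma cl_eq_self {M a : ℝ} (h0 : 0 ≤ a) (hM : a ≤ M) : cl M a = a := by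
  unfold cl; rw [max_eq_left h0, min_eq_left hM]

lemma cl_of_nonpos {M a : ℝ} (hM : 0 ≤ M) (ha : a ≤ 0) : cl M a = 0 := by
  unfold cl; rw [max_eq_right ha, min_eq_left hM]

lemma cl_zero {M : ℝ} (hM : 0 ≤ M) : cl M 0 = 0 := cl_of_nonpos hM le_rfl

lemma abs_cl_sub_cl (M a b : ℝ) : |cl M a - cl M b| ≤ |a - b| := by
  unfold cl
  refine (abs_min_sub_min_le_max _ _ _ _).trans (max_le ?_ (by simp [abs_nonneg]))
  exact abs_max_sub_max_le_abs a b 0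

variable (θ : ℕ → ℕ → ℝ) (n : ℕ)

/-- total kernel mass over the square `[1,n]²`. -/
def Th : ℝ := ∑ p ∈ Finset.Icc 1 n ×ˢ Finset.Icc 1 n, θ p.1 p.2

lemma Th_nonneg (hθ : ∀ i j : ℕ, 1 ≤ i → 1 ≤ j → 0 ≤ θ i j) : 0 ≤ Th θ n :=
  Finset.sum_nonneg fun p hp => by
    simp only [Finset.mem_product, Finset.mem_Icc] at hp
    exact hθ _ _ hp.1.1 hp.2.1

lemma theta_le_Th (hθ : ∀ i j : ℕ, 1 ≤ i → 1 ≤ j → 0 ≤ θ i j) {a b : ℕ}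
    (ha1 : 1 ≤ a) (han : a ≤ n) (hb1 : 1 ≤ b) (hbn : b ≤ n) : θ a b ≤ Th θ n := by
  refine Finset.single_le_sum (f := fun p : ℕ × ℕ => θ p.1 p.2) ?_ (a := (a, b)) ?_
  · intro p hp
    simp only [Finset.mem_product, Finset.mem_Icc] at hp
    exact hθ _ _ hp.1.1 hp.2.1
  · simp [Finset.mem_product, Finset.mem_Icc, ha1, han, hb1, hbn]

/-- read a vector of size `n+1` as a function on `ℕ` (zero outside). -/
def rd (x : Fin (n+1) → ℝ) (k : ℕ) : ℝ := if h : k < n + 1 then x ⟨k, h⟩ else 0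

lemma abs_rd_le (x : Fin (n+1) → ℝ) (k : ℕ) : |rd n x k| ≤ ‖x‖ := by
  unfold rd
  split
  · exact (norm_le_pi_norm x _)
  · simpa using norm_nonneg x

lemma abs_rd_sub_rd_le (x y : Fin (n+1) → ℝ) (k : ℕ) :
    |rd n x k - rd n y k| ≤ dist x y := by
  unfold rd
  split
  · rw [← Real.dist_eq]; exact dist_le_pi_dist x y _
  · simpa using dist_nonneg (x := x) (y := y)

/-- the (clamped or not) RBK vector field, coordinate `i`, as a function of `u : ℕ → ℝ`. -/
def Psi (i : ℕ) (u : ℕ → ℝ) : ℝ :=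
  if 1 ≤ i then
    (∑ j ∈ Finset.Icc 1 (n - i), θ (i + j) j * u (i + j) * u j)
      - ∑ j ∈ Finset.Icc 1 n, θ i j * u i * u j
  else 0

lemma Psi_zero (u : ℕ → ℝ) : Psi θ n 0 u = 0 := by simp [Psi]

lemma Psi_congr {i : ℕ} (hi1 : 1 ≤ i) (hin : i ≤ n) {u v : ℕ → ℝ}
    (h : ∀ k, 1 ≤ k → k ≤ n → u k = v k) : Psi θ n i u = Psi θ n i v := by
  unfold Psi
  rw [if_pos hi1, if_pos hi1]
  congr 1
  · refine Finset.sum_congr rfl fun j hj => ?_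
    rw [Finset.mem_Icc] at hj
    rw [h (i + j) (by omega) (by omega), h j (by omega) (by omega)]
  · refine Finset.sum_congr rfl fun j hj => ?_
    rw [Finset.mem_Icc] at hj
    rw [h i hi1 hin, h j (by omega) (by omega)]

lemma abs_mul_sub_mul (a b c d : ℝ) : |a * b - c * d| ≤ |a| * |b - d| + |d| * |a - c| := by
  have : a * b - c * d = a * (b - d) + d * (a - c) := by ring
  rw [this]
  exact (abs_add_le _ _).trans (by rw [abs_mul, abs_mul])

lemma Psi_sub_Psi (hθ : ∀ i j : ℕ, 1 ≤ i → 1 ≤ j → 0 ≤ θ i j)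
    {i : ℕ} (hi1 : 1 ≤ i) (hin : i ≤ n) {u v : ℕ → ℝ} {R d : ℝ}
    (hR : 0 ≤ R) (hd : 0 ≤ d)
    (hu : ∀ k, |u k| ≤ R) (hv : ∀ k, |v k| ≤ R)
    (huv : ∀ k, |u k - v k| ≤ d) :
    |Psi θ n i u - Psi θ n i v| ≤ 4 * n * Th θ n * R * d := by
  have hTh := Th_nonneg θ n hθ
  have hterm : ∀ a b : ℕ, 1 ≤ a → a ≤ n → 1 ≤ b → b ≤ n →
      |θ a b * u a * u b - θ a b * v a * v b| ≤ Th θ n * (2 * R * d) := by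
    intro a b ha1 han hb1 hbn
    have h1 : θ a b * u a * u b - θ a b * v a * v b = θ a b * (u a * u b - v a * v b) := by ring
    rw [h1, abs_mul]
    have h2 : |u a * u b - v a * v b| ≤ 2 * R * d := by
      calc |u a * u b - v a * v b| ≤ |u a| * |u b - v b| + |v b| * |u a - v a| :=
            abs_mul_sub_mul _ _ _ _
        _ ≤ R * d + R * d := by
            refine add_le_add (mul_le_mul (hu a) (huv b) (abs_nonneg _) hR)
              (mul_le_mul (hv b) (huv a) (abs_nonneg _) hR)
        _ = 2 * R * d := by ring
    have h3 : |θ a b| ≤ Th θ n := by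
      rw [abs_of_nonneg (hθ _ _ ha1 hb1)]
      exact theta_le_Th θ n hθ ha1 han hb1 hbn
    exact mul_le_mul h3 h2 (abs_nonneg _) hTh
  unfold Psi
  rw [if_pos hi1, if_pos hi1]
  have key : ∀ (s : Finset ℕ) (F G : ℕ → ℝ),
      (∀ j ∈ s, |F j - G j| ≤ Th θ n * (2 * R * d)) → s.card ≤ n →
      |∑ j ∈ s, F j - ∑ j ∈ s, G j| ≤ n * (Th θ n * (2 * R * d)) := by
    intro s F G hFG hcard
    rw [← Finset.sum_sub_distrib]
    refine (Finset.abs_sum_le_sum_abs _ _).trans ?_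
    refine (Finset.sum_le_card_nsmul s _ _ hFG).trans ?_
    rw [nsmul_eq_mul]
    have : (0:ℝ) ≤ Th θ n * (2 * R * d) := by positivity
    exact mul_le_mul_of_nonneg_right (by exact_mod_cast hcard) this
  have hgain := key (Finset.Icc 1 (n - i))
      (fun j => θ (i + j) j * u (i + j) * u j) (fun j => θ (i + j) j * v (i + j) * v j)
      (fun j hj => by
        rw [Finset.mem_Icc] at hj
        exact hterm (i + j) j (by omega) (by omega) (by omega) (by omega))
      (by rw [Nat.card_Icc]; omega)
  have hloss := key (Finset.Icc 1 n)
      (fun j => θ i j * u i * u j) (fun j => θ i j * v i * v j)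
      (fun j hj => by
        rw [Finset.mem_Icc] at hj
        exact hterm i j hi1 hin (by omega) (by omega))
      (by rw [Nat.card_Icc]; omega)
  calc |(∑ j ∈ Finset.Icc 1 (n - i), θ (i + j) j * u (i + j) * u j
          - ∑ j ∈ Finset.Icc 1 n, θ i j * u i * u j)
        - ((∑ j ∈ Finset.Icc 1 (n - i), θ (i + j) j * v (i + j) * v j)
          - ∑ j ∈ Finset.Icc 1 n, θ i j * v i * v j)|
      ≤ |∑ j ∈ Finset.Icc 1 (n - i), θ (i + j) j * u (i + j) * u j
          - ∑ j ∈ Finset.Icc 1 (n - i), θ (i + j) j * v (i + j) * v j|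
        + |∑ j ∈ Finset.Icc 1 n, θ i j * u i * u j
          - ∑ j ∈ Finset.Icc 1 n, θ i j * v i * v j| := by
        rw [show (∑ j ∈ Finset.Icc 1 (n - i), θ (i + j) j * u (i + j) * u j
          - ∑ j ∈ Finset.Icc 1 n, θ i j * u i * u j)
        - ((∑ j ∈ Finset.Icc 1 (n - i), θ (i + j) j * v (i + j) * v j)
          - ∑ j ∈ Finset.Icc 1 n, θ i j * v i * v j)
          = (∑ j ∈ Finset.Icc 1 (n - i), θ (i + j) j * u (i + j) * u j
          - ∑ j ∈ Finset.Icc 1 (n - i), θ (i + j) j * v (i + j) * v j)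
        - (∑ j ∈ Finset.Icc 1 n, θ i j * u i * u j
          - ∑ j ∈ Finset.Icc 1 n, θ i j * v i * v j) from by ring]
        exact abs_sub _ _
    _ ≤ n * (Th θ n * (2 * R * d)) + n * (Th θ n * (2 * R * d)) := add_le_add hgain hloss
    _ = 4 * n * Th θ n * R * d := by ring

/-- the clamped RBK vector field on `ℝ^{n+1}`. -/
def vF (x : Fin (n+1) → ℝ) : Fin (n+1) → ℝ := fun i => Psi θ n i (rd n x)

def vf (M : ℝ) (x : Fin (n+1) → ℝ) : Fin (n+1) → ℝ :=
  fun i => Psi θ n i (fun k => cl M (rd n x k))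

lemma vF_lipschitzOnWith (hθ : ∀ i j : ℕ, 1 ≤ i → 1 ≤ j → 0 ≤ θ i j) {R : ℝ} (hR : 0 ≤ R) :
    LipschitzOnWith (Real.toNNReal (4 * n * Th θ n * R)) (vF θ n)
      (closedBall (0 : Fin (n+1) → ℝ) R) := by
  have hTh := Th_nonneg θ n hθ
  rw [lipschitzOnWith_iff_dist_le_mul]
  intro x hx y hy
  rw [Real.coe_toNNReal _ (by positivity)]
  have hd : (0:ℝ) ≤ dist x y := dist_nonneg
  refine (dist_pi_le_iff (by positivity)).2 fun i => ?_
  rw [Real.dist_eq]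
  have hxn : ‖x‖ ≤ R := by rwa [mem_closedBall, dist_zero_right] at hx
  have hyn : ‖y‖ ≤ R := by rwa [mem_closedBall, dist_zero_right] at hy
  rcases Nat.eq_zero_or_pos (i : ℕ) with h0 | h1
  · simp only [vF, h0, Psi_zero, sub_zero, abs_zero]
    positivity
  · have hin : (i:ℕ) ≤ n := Nat.lt_succ_iff.mp i.isLt
    exact Psi_sub_Psi θ n hθ h1 hin hR hd
      (fun k => (abs_rd_le n x k).trans hxn)
      (fun k => (abs_rd_le n y k).trans hyn)
      (fun k => abs_rd_sub_rd_le n x y k)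

def clampMap (M : ℝ) (x : Fin (n+1) → ℝ) : Fin (n+1) → ℝ := fun i => cl M (x i)

lemma vf_eq_comp {M : ℝ} (hM : 0 ≤ M) : vf θ n M = vF θ n ∘ clampMap n M := by
  funext x i
  simp only [vf, vF, Function.comp, clampMap]
  congr 1
  funext k
  unfold rd
  by_cases h : k < n + 1
  · simp [h, clampMap]
  · simp [h, clampMap, cl_zero hM]

lemma clampMap_lipschitz (M : ℝ) : LipschitzWith 1 (clampMap n M) := by
  apply LipschitzWith.of_dist_le_mul
  intro x y
  rw [NNReal.coe_one, one_mul]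
  refine (dist_pi_le_iff dist_nonneg).2 fun i => ?_
  rw [Real.dist_eq]
  exact (abs_cl_sub_cl M _ _).trans (by rw [← Real.dist_eq]; exact dist_le_pi_dist x y i)

lemma clampMap_mem {M : ℝ} (hM : 0 ≤ M) (x : Fin (n+1) → ℝ) :
    clampMap n M x ∈ closedBall (0 : Fin (n+1) → ℝ) M := by
  rw [mem_closedBall, dist_zero_right]
  refine (pi_norm_le_iff_of_nonneg hM).2 fun i => ?_
  rw [Real.norm_eq_abs]
  exact abs_cl_le hM _

lemma vf_lipschitz (hθ : ∀ i j : ℕ, 1 ≤ i → 1 ≤ j → 0 ≤ θ i j) {M : ℝ} (hM : 0 ≤ M) :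
    LipschitzWith (Real.toNNReal (4 * n * Th θ n * M) * 1) (vf θ n M) := by
  rw [← lipschitzOnWith_univ, vf_eq_comp θ n hM]
  exact (vF_lipschitzOnWith θ n hθ hM).comp
    ((clampMap_lipschitz n M).lipschitzOnWith)
    (fun x _ => clampMap_mem n hM x)

lemma abs_Psi_le (hθ : ∀ i j : ℕ, 1 ≤ i → 1 ≤ j → 0 ≤ θ i j) {i : ℕ} (hin : i ≤ n)
    {u : ℕ → ℝ} {M : ℝ} (hM : 0 ≤ M) (hu : ∀ k, |u k| ≤ M) :
    |Psi θ n i u| ≤ 2 * n * Th θ n * M ^ 2 := by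
  have hTh := Th_nonneg θ n hθ
  rcases Nat.eq_zero_or_pos i with h0 | h1'
  · rw [h0, Psi_zero, abs_zero]; positivity
  · have h1 : 1 ≤ i := h1'
    have hterm : ∀ a b : ℕ, 1 ≤ a → a ≤ n → 1 ≤ b → b ≤ n →
        |θ a b * u a * u b| ≤ Th θ n * M ^ 2 := by
      intro a b ha1 han hb1 hbn
      rw [abs_mul, abs_mul]
      have h3 : |θ a b| ≤ Th θ n := by
        rw [abs_of_nonneg (hθ _ _ ha1 hb1)]
        exact theta_le_Th θ n hθ ha1 han hb1 hbn
      calc |θ a b| * |u a| * |u b| ≤ Th θ n * M * M := by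
            refine mul_le_mul (mul_le_mul h3 (hu a) (abs_nonneg _) hTh) (hu b) (abs_nonneg _)
              (by positivity)
        _ = Th θ n * M ^ 2 := by ring
    have key : ∀ (s : Finset ℕ) (F : ℕ → ℝ),
        (∀ j ∈ s, |F j| ≤ Th θ n * M ^ 2) → s.card ≤ n →
        |∑ j ∈ s, F j| ≤ n * (Th θ n * M ^ 2) := by
      intro s F hF hcard
      refine (Finset.abs_sum_le_sum_abs _ _).trans ?_
      refine (Finset.sum_le_card_nsmul s _ _ hF).trans ?_
      rw [nsmul_eq_mul]
      exact mul_le_mul_of_nonneg_right (by exact_mod_cast hcard) (by positivity)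
    unfold Psi
    rw [if_pos h1]
    refine (abs_sub _ _).trans ?_
    have hgain := key (Finset.Icc 1 (n - i)) (fun j => θ (i + j) j * u (i + j) * u j)
      (fun j hj => by
        rw [Finset.mem_Icc] at hj
        exact hterm (i + j) j (by omega) (by omega) (by omega) (by omega))
      (by rw [Nat.card_Icc]; omega)
    have hloss := key (Finset.Icc 1 n) (fun j => θ i j * u i * u j)
      (fun j hj => by
        rw [Finset.mem_Icc] at hj
        exact hterm i j h1 hin (by omega) (by omega))
      (by rw [Nat.card_Icc]; omega)
    calc |∑ j ∈ Finset.Icc 1 (n - i), θ (i + j) j * u (i + j) * u j|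
          + |∑ j ∈ Finset.Icc 1 n, θ i j * u i * u j|
        ≤ n * (Th θ n * M ^ 2) + n * (Th θ n * M ^ 2) := add_le_add hgain hloss
      _ = 2 * n * Th θ n * M ^ 2 := by ring

lemma vf_bound (hθ : ∀ i j : ℕ, 1 ≤ i → 1 ≤ j → 0 ≤ θ i j) {M : ℝ} (hM : 0 ≤ M)
    (x : Fin (n+1) → ℝ) : ‖vf θ n M x‖ ≤ 2 * n * Th θ n * M ^ 2 := by
  have hTh := Th_nonneg θ n hθ
  refine (pi_norm_le_iff_of_nonneg (by positivity)).2 fun i => ?_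
  rw [Real.norm_eq_abs]
  exact abs_Psi_le θ n hθ (Nat.lt_succ_iff.mp i.isLt) hM (fun k => abs_cl_le hM _)

lemma exists_sol_Icc (hθ : ∀ i j : ℕ, 1 ≤ i → 1 ≤ j → 0 ≤ θ i j) {M : ℝ} (hM : 0 ≤ M)
    (x₀ : Fin (n+1) → ℝ) {T : ℝ} (hT : 0 < T) :
    ∃ g : ℝ → (Fin (n+1) → ℝ), g 0 = x₀ ∧
      ∀ t ∈ Icc (0:ℝ) T, HasDerivWithinAt g (vf θ n M (g t)) (Icc (0:ℝ) T) t := by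
  have hTh := Th_nonneg θ n hθ
  set C : ℝ := 2 * n * Th θ n * M ^ 2 with hC
  have hC0 : (0:ℝ) ≤ C := by positivity
  have hpl : IsPicardLindelof (fun _ x => vf θ n M x) (tmin := 0) (tmax := T)
      ⟨0, le_refl 0, hT.le⟩ x₀ (Real.toNNReal (C * T)) 0 (Real.toNNReal C)
      (Real.toNNReal (4 * n * Th θ n * M) * 1) :=
    { lipschitzOnWith := fun t _ => (vf_lipschitz θ n hθ hM).lipschitzOnWith
      continuousOn := fun x _ => continuousOn_const
      norm_le := fun t _ x _ => by
        rw [Real.coe_toNNReal _ hC0]; exact vf_bound θ n hθ hM x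
      mul_max_le := by
        rw [Real.coe_toNNReal _ hC0, Real.coe_toNNReal _ (by positivity)]
        simp [max_eq_left hT.le] }
  obtain ⟨g, hg0, hg⟩ := hpl.exists_eq_forall_mem_Icc_hasDerivWithinAt₀
  exact ⟨g, hg0, hg⟩

lemma exists_sol_Ici (hθ : ∀ i j : ℕ, 1 ≤ i → 1 ≤ j → 0 ≤ θ i j) {M : ℝ} (hM : 0 ≤ M)
    (x₀ : Fin (n+1) → ℝ) :
    ∃ g : ℝ → (Fin (n+1) → ℝ), g 0 = x₀ ∧
      ∀ t ∈ Ici (0:ℝ), HasDerivWithinAt g (vf θ n M (g t)) (Ici (0:ℝ)) t := by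
  have H : ∀ m : ℕ, ∃ g : ℝ → (Fin (n+1) → ℝ), g 0 = x₀ ∧
      ∀ t ∈ Icc (0:ℝ) (m+1), HasDerivWithinAt g (vf θ n M (g t)) (Icc (0:ℝ) (m+1)) t :=
    fun m => exists_sol_Icc θ n hθ hM x₀ (by positivity)
  choose y hy0 hy using H
  have hderiv : ∀ m : ℕ, ∀ t ∈ Ico (0:ℝ) (m+1),
      HasDerivWithinAt (y m) (vf θ n M (y m t)) (Ici t) t := by
    intro m t ht
    have h1 := hy m t ⟨ht.1, ht.2.le⟩
    have h2 : Ici t ∩ Iio ((m:ℝ)+1) ⊆ Icc 0 (m+1) := fun z hz => ⟨le_trans ht.1 hz.1, hz.2.le⟩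
    exact (hasDerivWithinAt_inter (Iio_mem_nhds ht.2)).mp (h1.mono h2)
  have hcont : ∀ m : ℕ, ContinuousOn (y m) (Icc (0:ℝ) (m+1)) :=
    fun m t ht => (hy m t ht).continuousWithinAt
  have agree : ∀ a b : ℕ, a ≤ b → ∀ t ∈ Icc (0:ℝ) (a+1), y a t = y b t := by
    intro a b hab
    have hab' : ((a:ℝ)+1) ≤ (b:ℝ)+1 := by
      have : (a:ℝ) ≤ b := Nat.cast_le.2 hab
      linarith
    exact ODE_solution_unique (v := fun _ x => vf θ n M x)
      (fun _ => vf_lipschitz θ n hθ hM)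
      (hcont a)
      (hderiv a)
      ((hcont b).mono (Icc_subset_Icc le_rfl hab'))
      (fun t ht => hderiv b t ⟨ht.1, lt_of_lt_of_le ht.2 hab'⟩)
      (by rw [hy0, hy0])
  refine ⟨fun t => y ⌊t⌋₊ t, by show y ⌊(0:ℝ)⌋₊ 0 = x₀; rw [Nat.floor_zero]; exact hy0 0, ?_⟩
  intro t ht
  rw [Set.mem_Ici] at ht
  set m := ⌊t⌋₊ with hm
  have htm : t < (m:ℝ) + 1 := Nat.lt_floor_add_one t
  have heq : ∀ s ∈ Ici (0:ℝ) ∩ Iio ((m:ℝ)+1), y ⌊s⌋₊ s = y m s := by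
    intro s hs
    have hs0 : (0:ℝ) ≤ s := hs.1
    rcases le_or_gt (⌊s⌋₊) m with h | h
    · exact agree _ _ h s ⟨hs0, (Nat.lt_floor_add_one s).le⟩
    · exact (agree m _ h.le s ⟨hs0, hs.2.le⟩).symm
  have h1 := hy m t ⟨ht, htm.le⟩
  have h2 : Ici (0:ℝ) ∩ Iio ((m:ℝ)+1) ⊆ Icc 0 ((m:ℝ)+1) := fun z hz => ⟨hz.1, hz.2.le⟩
  have h3 := (h1.mono h2).congr heq (heq t ⟨ht, htm⟩)
  rw [← heq t ⟨ht, htm⟩] at h3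
  exact (hasDerivWithinAt_inter (Iio_mem_nhds htm)).mp h3

lemma quasipos (hθ : ∀ i j : ℕ, 1 ≤ i → 1 ≤ j → 0 ≤ θ i j) {M : ℝ} (hM : 0 ≤ M)
    (x : Fin (n+1) → ℝ) (i : Fin (n+1)) (hxi : x i ≤ 0) : 0 ≤ vf θ n M x i := by
  unfold vf Psi
  rcases Nat.eq_zero_or_pos (i:ℕ) with h0 | h1'
  · rw [if_neg (by omega)]
  · have h1 : 1 ≤ (i:ℕ) := h1'
    rw [if_pos h1]
    have hrd : rd n x (i:ℕ) = x i := by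
      unfold rd; rw [dif_pos i.isLt]
    have hcl : cl M (rd n x (i:ℕ)) = 0 := by
      rw [hrd]; exact cl_of_nonpos hM hxi
    have hloss : ∑ j ∈ Finset.Icc 1 n, θ i j * cl M (rd n x (i:ℕ)) * cl M (rd n x j) = 0 := by
      refine Finset.sum_eq_zero fun j hj => ?_
      rw [hcl, mul_zero, zero_mul]
    rw [hloss, sub_zero]
    refine Finset.sum_nonneg fun j hj => ?_
    rw [Finset.mem_Icc] at hj
    exact mul_nonneg (mul_nonneg (hθ _ _ (by omega) hj.1) (cl_nonneg hM _)) (cl_nonneg hM _)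

lemma sol_nonneg (hθ : ∀ i j : ℕ, 1 ≤ i → 1 ≤ j → 0 ≤ θ i j) {M : ℝ} (hM : 0 ≤ M)
    {x₀ : Fin (n+1) → ℝ} (hx₀ : ∀ i, 0 ≤ x₀ i)
    {g : ℝ → Fin (n+1) → ℝ} (hg0 : g 0 = x₀)
    (hg : ∀ t ∈ Ici (0:ℝ), HasDerivWithinAt g (vf θ n M (g t)) (Ici (0:ℝ)) t) :
    ∀ t ∈ Ici (0:ℝ), ∀ i, 0 ≤ g t i := by
  intro t1 ht1 i
  rw [Set.mem_Ici] at ht1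
  rcases eq_or_lt_of_le ht1 with h | hti
  · rw [← h, hg0]; exact hx₀ i
  by_contra hlt
  push_neg at hlt
  have hgi : ∀ t ∈ Ici (0:ℝ), HasDerivWithinAt (fun s => g s i) (vf θ n M (g t) i)
      (Ici (0:ℝ)) t := fun t ht => (hasDerivWithinAt_pi.mp (hg t ht)) i
  have hconti : ContinuousOn (fun s => g s i) (Icc 0 t1) := fun s hs =>
    ((hgi s hs.1).continuousWithinAt).mono Icc_subset_Ici_self
  set A := {s | s ∈ Icc (0:ℝ) t1 ∧ 0 ≤ g s i} with hA
  have hAclosed : IsClosed A := by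
    have h := hconti.preimage_isClosed_of_isClosed isClosed_Icc (isClosed_Ici (a := (0:ℝ)))
    have he : A = Icc 0 t1 ∩ (fun s => g s i) ⁻¹' Ici 0 := by
      ext s
      simp [hA, Set.mem_preimage, Set.mem_Ici, Set.mem_setOf_eq]
    rw [he]
    exact h
  have hA0 : (0:ℝ) ∈ A := ⟨⟨le_refl 0, hti.le⟩, by rw [hg0]; exact hx₀ i⟩
  have hbdd : BddAbove A := ⟨t1, fun s hs => hs.1.2⟩
  set τ := sSup A with hτ
  have hτA : τ ∈ A := hAclosed.csSup_mem ⟨0, hA0⟩ hbdd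
  have hτ0 : 0 ≤ τ := hτA.1.1
  have hτt1 : τ < t1 := by
    rcases eq_or_lt_of_le hτA.1.2 with h | h
    · exfalso; rw [h] at hτA; linarith [hτA.2]
    · exact h
  have hneg : ∀ s, τ < s → s ≤ t1 → g s i < 0 := by
    intro s hs1 hs2
    by_contra h; push_neg at h
    have hsA : s ∈ A := ⟨⟨le_trans hτ0 hs1.le, hs2⟩, h⟩
    exact absurd (le_csSup hbdd hsA) (not_le.2 hs1)
  have hmono : MonotoneOn (fun s => g s i) (Icc τ t1) := by
    apply monotoneOn_of_deriv_nonneg (convex_Icc τ t1)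
    · exact hconti.mono (Icc_subset_Icc hτ0 le_rfl)
    · intro s hs
      rw [interior_Icc] at hs
      have h0s : (0:ℝ) < s := lt_of_le_of_lt hτ0 hs.1
      exact ((hgi s h0s.le).hasDerivAt (Ici_mem_nhds h0s)).differentiableAt.differentiableWithinAt
    · intro s hs
      rw [interior_Icc] at hs
      have h0s : (0:ℝ) < s := lt_of_le_of_lt hτ0 hs.1
      have hD := (hgi s h0s.le).hasDerivAt (Ici_mem_nhds h0s)
      rw [hD.deriv]
      exact quasipos θ n hθ hM _ i (le_of_lt (hneg s hs.1 hs.2.le))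
  have hle := hmono (left_mem_Icc.2 hτt1.le) (right_mem_Icc.2 hτt1.le) hτt1.le
  have := hτA.2
  simp only at hle
  linarith

lemma sum_fin_ite (F : ℕ → ℝ) :
    ∑ i : Fin (n+1), (if 1 ≤ (i:ℕ) then F i else 0) = ∑ k ∈ Finset.Icc 1 n, F k := by
  rw [Fin.sum_univ_eq_sum_range (fun k => if 1 ≤ k then F k else 0) (n+1),
    Finset.sum_range_succ']
  rw [if_neg (by omega), add_zero]
  have h1 : ∀ k ∈ Finset.range n, (if 1 ≤ k + 1 then F (k+1) else 0) = F (k+1) :=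
    fun k _ => if_pos (by omega)
  rw [Finset.sum_congr rfl h1]
  rw [← Finset.Ico_add_one_right_eq_Icc, Finset.sum_Ico_eq_sum_range, Nat.add_sub_cancel]
  exact (Finset.sum_congr rfl fun k _ => by rw [Nat.add_comm]).symm

lemma gain_le_loss (hθ : ∀ i j : ℕ, 1 ≤ i → 1 ≤ j → 0 ≤ θ i j) (u : ℕ → ℝ)
    (hu : ∀ k, 0 ≤ u k) :
    ∑ i ∈ Finset.Icc 1 n, ∑ j ∈ Finset.Icc 1 (n - i), θ (i+j) j * u (i+j) * u j
      ≤ ∑ i ∈ Finset.Icc 1 n, ∑ j ∈ Finset.Icc 1 n, θ i j * u i * u j := by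
  have hswap : ∑ i ∈ Finset.Icc 1 n, ∑ j ∈ Finset.Icc 1 (n - i), θ (i+j) j * u (i+j) * u j
      = ∑ j ∈ Finset.Icc 1 n, ∑ i ∈ Finset.Icc 1 (n - j), θ (i+j) j * u (i+j) * u j := by
    refine Finset.sum_comm' ?_
    intro x y; simp only [Finset.mem_Icc]; omega
  rw [hswap]
  have hinner : ∀ j ∈ Finset.Icc 1 n,
      ∑ i ∈ Finset.Icc 1 (n - j), θ (i+j) j * u (i+j) * u j
        ≤ ∑ k ∈ Finset.Icc 1 n, θ k j * u k * u j := by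
    intro j hj
    rw [Finset.mem_Icc] at hj
    have hmap : ∑ i ∈ Finset.Icc 1 (n - j), θ (i+j) j * u (i+j) * u j
        = ∑ k ∈ Finset.Icc (1+j) (n-j+j), θ k j * u k * u j := by
      rw [← Finset.map_add_right_Icc, Finset.sum_map]
      rfl
    rw [hmap, Nat.sub_add_cancel hj.2]
    refine Finset.sum_le_sum_of_subset_of_nonneg (Finset.Icc_subset_Icc_left (by omega)) ?_
    intro k hk _
    rw [Finset.mem_Icc] at hk
    exact mul_nonneg (mul_nonneg (hθ _ _ hk.1 hj.1) (hu _)) (hu _)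
  calc ∑ j ∈ Finset.Icc 1 n, ∑ i ∈ Finset.Icc 1 (n - j), θ (i+j) j * u (i+j) * u j
      ≤ ∑ j ∈ Finset.Icc 1 n, ∑ k ∈ Finset.Icc 1 n, θ k j * u k * u j :=
        Finset.sum_le_sum hinner
    _ = ∑ i ∈ Finset.Icc 1 n, ∑ j ∈ Finset.Icc 1 n, θ i j * u i * u j := Finset.sum_comm

lemma sum_Psi_nonpos (hθ : ∀ i j : ℕ, 1 ≤ i → 1 ≤ j → 0 ≤ θ i j) (u : ℕ → ℝ)
    (hu : ∀ k, 0 ≤ u k) : ∑ i : Fin (n+1), Psi θ n (i:ℕ) u ≤ 0 := by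
  have h : ∑ i : Fin (n+1), Psi θ n (i:ℕ) u
      = ∑ k ∈ Finset.Icc 1 n, ((∑ j ∈ Finset.Icc 1 (n - k), θ (k+j) j * u (k+j) * u j)
          - ∑ j ∈ Finset.Icc 1 n, θ k j * u k * u j) := by
    simp only [Psi]
    exact sum_fin_ite n (fun k => (∑ j ∈ Finset.Icc 1 (n - k), θ (k+j) j * u (k+j) * u j)
      - ∑ j ∈ Finset.Icc 1 n, θ k j * u k * u j)
  rw [h, Finset.sum_sub_distrib, sub_nonpos]
  exact gain_le_loss θ n hθ u hu

end RBKaux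


open Set Metric

/-- If the initial datum of the truncated RBK system is nonnegative, then
every (local) solution stays componentwise nonnegative in forward time, and the maximal
solution is global in forward time, i.e. there is a solution defined on all of `[0,∞)`. -/
theorem truncRBK_nonneg_and_global
    (θ : ℕ → ℕ → ℝ)
    (hθ_nonneg : ∀ i j : ℕ, 1 ≤ i → 1 ≤ j → 0 ≤ θ i j)
    (hθ_symm : ∀ i j : ℕ, 1 ≤ i → 1 ≤ j → θ i j = θ j i)
    (n : ℕ) (hn : 2 ≤ n)
    (fin : ℕ → ℝ) (hfin : ∀ i ∈ Finset.Icc 1 n, 0 ≤ fin i) :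
    -- (ii) any local solution with this initial datum has nonnegative components
    -- at all nonnegative times of its interval of existence
    (∀ I : Set ℝ, I.OrdConnected → (0:ℝ) ∈ I →
      ∀ f : ℕ → ℝ → ℝ, IsTruncRBKOn θ n I f →
        (∀ i ∈ Finset.Icc 1 n, f i 0 = fin i) →
        ∀ i ∈ Finset.Icc 1 n, ∀ t ∈ I, 0 ≤ t → 0 ≤ f i t)
    -- (iii) sup I_max = +∞ : the solution extends to a global solution on [0,∞)
    ∧ ∃ f : ℕ → ℝ → ℝ, IsTruncRBKOn θ n (Set.Ici 0) f
        ∧ (∀ i ∈ Finset.Icc 1 n, f i 0 = fin i) := by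
  classical
  set M : ℝ := (∑ i ∈ Finset.Icc 1 n, fin i) + 1 with hMdef
  have hsum0 : 0 ≤ ∑ i ∈ Finset.Icc 1 n, fin i := Finset.sum_nonneg hfin
  have hM : 0 ≤ M := by rw [hMdef]; linarith
  set x₀ : Fin (n+1) → ℝ := fun i => if 1 ≤ (i:ℕ) then fin i else 0 with hx₀def
  have hx₀ : ∀ i, 0 ≤ x₀ i := fun i => by
    simp only [hx₀def]
    by_cases h : 1 ≤ (i:ℕ)
    · rw [if_pos h]
      exact hfin i (Finset.mem_Icc.2 ⟨h, Nat.lt_succ_iff.mp i.isLt⟩)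
    · rw [if_neg h]
  obtain ⟨g, hg0, hg⟩ := RBKaux.exists_sol_Ici θ n hθ_nonneg hM x₀
  have hgnn : ∀ t ∈ Set.Ici (0:ℝ), ∀ i, 0 ≤ g t i :=
    RBKaux.sol_nonneg θ n hθ_nonneg hM hx₀ hg0 hg
  -- the total mass is nonincreasing
  have hSd : ∀ t ∈ Set.Ici (0:ℝ), HasDerivWithinAt (fun s => ∑ i : Fin (n+1), g s i)
      (∑ i : Fin (n+1), RBKaux.vf θ n M (g t) i) (Set.Ici 0) t := fun t ht =>
    HasDerivWithinAt.fun_sum (fun i _ => (hasDerivWithinAt_pi.mp (hg t ht)) i)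
  have hSanti : AntitoneOn (fun s => ∑ i : Fin (n+1), g s i) (Set.Ici 0) := by
    apply antitoneOn_of_deriv_nonpos (convex_Ici 0)
    · intro s hs; exact (hSd s hs).continuousWithinAt
    · intro s hs
      rw [interior_Ici] at hs
      exact ((hSd s (Set.mem_Ici.2 (le_of_lt hs))).hasDerivAt (Ici_mem_nhds hs)).differentiableAt.differentiableWithinAt
    · intro s hs
      rw [interior_Ici] at hs
      rw [((hSd s (Set.mem_Ici.2 (le_of_lt hs))).hasDerivAt (Ici_mem_nhds hs)).deriv]
      exact RBKaux.sum_Psi_nonpos θ n hθ_nonneg _ (fun k => RBKaux.cl_nonneg hM _)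
  have hmass : ∀ t ∈ Set.Ici (0:ℝ), ∀ i, g t i ≤ M - 1 := by
    intro t ht i
    have h1 : ∑ i : Fin (n+1), g t i ≤ ∑ i : Fin (n+1), g 0 i :=
      hSanti (self_mem_Ici) ht ht
    have h2 : ∑ i : Fin (n+1), g 0 i = M - 1 := by
      rw [hg0]
      simp only [hx₀def]
      rw [RBKaux.sum_fin_ite n fin, hMdef]
      ring
    have h3 : g t i ≤ ∑ i : Fin (n+1), g t i :=
      Finset.single_le_sum (fun j _ => hgnn t ht j) (Finset.mem_univ i)
    linarith
  -- inside the box the clamped field agrees with the true field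
  have hbox : ∀ t ∈ Set.Ici (0:ℝ), RBKaux.vf θ n M (g t) = RBKaux.vF θ n (g t) := by
    intro t ht
    funext i
    show RBKaux.Psi θ n (i:ℕ) _ = RBKaux.Psi θ n (i:ℕ) _
    congr 1
    funext k
    unfold RBKaux.rd
    by_cases h : k < n + 1
    · simp only [dif_pos h]
      exact RBKaux.cl_eq_self (hgnn t ht _) ((hmass t ht _).trans (by linarith))
    · simp only [dif_neg h]
      exact RBKaux.cl_zero hM
  constructor
  · -- part (ii)
    intro I hIoc hI0 f hf hf0 i hi t1 ht1I ht1
    set Fv : ℝ → Fin (n+1) → ℝ := fun t j => if 1 ≤ (j:ℕ) then f j t else 0 with hFv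
    have hIcc : Set.Icc 0 t1 ⊆ I := hIoc.out hI0 ht1I
    have hFd : ∀ t ∈ Set.Icc (0:ℝ) t1,
        HasDerivWithinAt Fv (RBKaux.vF θ n (Fv t)) (Set.Icc 0 t1) t := by
      intro t ht
      rw [hasDerivWithinAt_pi]
      intro j
      by_cases hj : 1 ≤ (j:ℕ)
      · have hjn : (j:ℕ) ≤ n := Nat.lt_succ_iff.mp j.isLt
        have hD := (hf j (Finset.mem_Icc.2 ⟨hj, hjn⟩) t (hIcc ht)).mono hIcc
        have hfe : ∀ s, Fv s j = f j s := fun s => if_pos hj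
        have hval : RBKaux.vF θ n (Fv t) j
            = (∑ jj ∈ Finset.Icc 1 (n - (j:ℕ)), θ ((j:ℕ) + jj) jj * f ((j:ℕ) + jj) t * f jj t)
              - ∑ jj ∈ Finset.Icc 1 n, θ (j:ℕ) jj * f (j:ℕ) t * f jj t := by
          show RBKaux.Psi θ n (j:ℕ) (RBKaux.rd n (Fv t)) = _
          rw [RBKaux.Psi_congr θ n hj hjn (v := fun k => f k t) ?hcong]
          · unfold RBKaux.Psi
            rw [if_pos hj]
          case hcong =>
            intro k hk1 hkn
            unfold RBKaux.rd
            rw [dif_pos (by omega : k < n+1)]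
            simp only [hFv]
            exact if_pos hk1
        rw [hval]
        exact hD.congr (fun s _ => hfe s) (hfe t)
      · have hval : RBKaux.vF θ n (Fv t) j = 0 := by
          show RBKaux.Psi θ n (j:ℕ) _ = 0
          rw [(by omega : (j:ℕ) = 0), RBKaux.Psi_zero]
        rw [hval]
        have hzero : (fun s => Fv s j) = fun _ => (0:ℝ) := funext fun s => if_neg hj
        rw [show (fun s => Fv s j) = fun _ => (0:ℝ) from hzero]
        exact hasDerivWithinAt_const t _ 0
    have hFc : ContinuousOn Fv (Set.Icc 0 t1) := fun s hs => (hFd s hs).continuousWithinAt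
    obtain ⟨Rf, hRf⟩ :=
      (isCompact_Icc (a := (0:ℝ)) (b := t1)).exists_bound_of_continuousOn hFc
    set R : ℝ := max M (max Rf 0) with hRdef
    have hR0 : (0:ℝ) ≤ R := le_trans (le_max_right Rf 0) (le_max_right _ _)
    have hFmem : ∀ t ∈ Set.Ico (0:ℝ) t1, Fv t ∈ closedBall (0 : Fin (n+1) → ℝ) R := by
      intro t ht
      rw [mem_closedBall, dist_zero_right]
      exact le_trans (hRf t ⟨ht.1, ht.2.le⟩) (le_trans (le_max_left _ _) (le_max_right _ _))
    have hgmem : ∀ t ∈ Set.Ico (0:ℝ) t1, g t ∈ closedBall (0 : Fin (n+1) → ℝ) R := by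
      intro t ht
      rw [mem_closedBall, dist_zero_right]
      refine (pi_norm_le_iff_of_nonneg hR0).2 fun j => ?_
      rw [Real.norm_eq_abs, abs_le]
      refine ⟨by linarith [hgnn t ht.1 j], ?_⟩
      exact le_trans (hmass t ht.1 j) (le_trans (by linarith) (le_max_left M (max Rf 0)))
    have hgc : ContinuousOn g (Set.Icc 0 t1) := fun s hs =>
      ((hg s hs.1).continuousWithinAt).mono Icc_subset_Ici_self
    have hgd : ∀ t ∈ Set.Ico (0:ℝ) t1,
        HasDerivWithinAt g (RBKaux.vF θ n (g t)) (Set.Ici t) t := by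
      intro t ht
      rw [← hbox t ht.1]
      exact (hg t ht.1).mono (Set.Ici_subset_Ici.2 ht.1)
    have hFdI : ∀ t ∈ Set.Ico (0:ℝ) t1,
        HasDerivWithinAt Fv (RBKaux.vF θ n (Fv t)) (Set.Ici t) t := by
      intro t ht
      have h1 := hFd t ⟨ht.1, ht.2.le⟩
      have h2 : Set.Ici t ∩ Set.Iio t1 ⊆ Set.Icc 0 t1 := fun z hz =>
        ⟨le_trans ht.1 hz.1, hz.2.le⟩
      exact (hasDerivWithinAt_inter (Iio_mem_nhds ht.2)).mp (h1.mono h2)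
    have hinit2 : Fv 0 = g 0 := by
      rw [hg0]
      funext j
      simp only [hFv, hx₀def]
      by_cases hj : 1 ≤ (j:ℕ)
      · rw [if_pos hj, if_pos hj]
        exact hf0 j (Finset.mem_Icc.2 ⟨hj, Nat.lt_succ_iff.mp j.isLt⟩)
      · rw [if_neg hj, if_neg hj]
    have hEq := ODE_solution_unique_of_mem_Icc_right
      (v := fun _ x => RBKaux.vF θ n x) (s := fun _ => closedBall 0 R)
      (fun _ _ => RBKaux.vF_lipschitzOnWith θ n hθ_nonneg hR0)
      hFc hFdI hFmem hgc hgd hgmem hinit2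
    have ht1m : t1 ∈ Set.Icc 0 t1 := ⟨ht1, le_rfl⟩
    have hEq1 := hEq ht1m
    rw [Finset.mem_Icc] at hi
    have hilt : i < n + 1 := by omega
    have hfi : f i t1 = g t1 ⟨i, hilt⟩ := by
      rw [← hEq1]
      simp only [hFv]
      exact (if_pos hi.1).symm
    rw [hfi]
    exact hgnn t1 ht1 _
  · -- part (iii)
    refine ⟨fun k t => RBKaux.rd n (g t) k, ?_, ?_⟩
    · intro i hi t ht
      rw [Finset.mem_Icc] at hi
      have hilt : i < n + 1 := by omega
      have hcomp := (hasDerivWithinAt_pi.mp (hg t ht)) ⟨i, hilt⟩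
      have hfe : ∀ s, RBKaux.rd n (g s) i = g s ⟨i, hilt⟩ := fun s => by
        unfold RBKaux.rd; rw [dif_pos hilt]
      have hval : RBKaux.vf θ n M (g t) ⟨i, hilt⟩
          = (∑ j ∈ Finset.Icc 1 (n - i), θ (i + j) j * RBKaux.rd n (g t) (i + j)
                * RBKaux.rd n (g t) j)
            - ∑ j ∈ Finset.Icc 1 n, θ i j * RBKaux.rd n (g t) i * RBKaux.rd n (g t) j := by
        rw [hbox t ht]
        show RBKaux.Psi θ n i (RBKaux.rd n (g t)) = _
        unfold RBKaux.Psi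
        rw [if_pos hi.1]
      rw [← hval] at *
      exact hcomp.congr (fun s _ => hfe s) (hfe t)
    · intro i hi
      rw [Finset.mem_Icc] at hi
      have hilt : i < n + 1 := by omega
      show RBKaux.rd n (g 0) i = fin i
      unfold RBKaux.rd
      rw [dif_pos hilt, hg0]
      simp only [hx₀def]
      exact if_pos hi.1

end RBKaux
end

section
/- Let n ≥ 2, let (θ_{i,j})_{i,j≥1} be a coagulation kernel satisfying (K1), and let f^n = (f_i^n)_{1≤i≤n} be the nonnegative global solution of the truncated RBK system with nonnegative initial data. Then for every t ∈ [0,∞), Σ_{i=1}^{n} f_i^n(t) + (1/2) ∫_0^t ( Σ_{i=1}^{n} ω_i f_i^n(s) )^2 ds ≤ Σ_{i=1}^{n} f_i^{n,in}. -/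
open MeasureTheory Finset Filter

private lemma tri_reindex (n : ℕ) (F : ℕ → ℕ → ℝ) :
    ∑ i ∈ Finset.Icc 1 n, ∑ j ∈ Finset.Icc 1 (n - i), F (i + j) j
      = ∑ k ∈ Finset.Icc 1 n, ∑ j ∈ Finset.Icc 1 (k - 1), F k j := by
  rw [Finset.sum_sigma', Finset.sum_sigma']
  apply Finset.sum_nbij' (fun p => ⟨p.1 + p.2, p.2⟩) (fun p => ⟨p.1 - p.2, p.2⟩)
  case hi =>
    rintro ⟨a, b⟩ hp
    simp only [Finset.mem_sigma, Finset.mem_Icc] at *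
    omega
  case hj =>
    rintro ⟨a, b⟩ hp
    simp only [Finset.mem_sigma, Finset.mem_Icc] at *
    omega
  case left_neg =>
    rintro ⟨a, b⟩ hp
    simp only [Finset.mem_sigma, Finset.mem_Icc] at hp
    simp only [Nat.add_sub_cancel]
  case right_neg =>
    rintro ⟨a, b⟩ hp
    simp only [Finset.mem_sigma, Finset.mem_Icc] at hp
    have hba : a - b + b = a := by omega
    simp [hba]
  case h =>
    rintro ⟨a, b⟩ hp
    rfl

private lemma swap_reindex (n : ℕ) (G : ℕ → ℕ → ℝ)
    (hG : ∀ i j, 1 ≤ i → 1 ≤ j → G i j = G j i) :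
    ∑ k ∈ Finset.Icc 1 n, ∑ j ∈ Finset.Icc 1 (k - 1), G k j
      = ∑ k ∈ Finset.Icc 1 n, ∑ j ∈ Finset.Icc (k + 1) n, G k j := by
  rw [Finset.sum_sigma', Finset.sum_sigma']
  apply Finset.sum_nbij' (fun p => ⟨p.2, p.1⟩) (fun p => ⟨p.2, p.1⟩)
  case hi =>
    rintro ⟨a, b⟩ hp
    simp only [Finset.mem_sigma, Finset.mem_Icc] at *
    omega
  case hj =>
    rintro ⟨a, b⟩ hp
    simp only [Finset.mem_sigma, Finset.mem_Icc] at *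
    omega
  case left_neg => rintro ⟨a, b⟩ hp; rfl
  case right_neg => rintro ⟨a, b⟩ hp; rfl
  case h =>
    rintro ⟨a, b⟩ hp
    simp only [Finset.mem_sigma, Finset.mem_Icc] at hp
    exact hG a b (by omega) (by omega)

section
variable (θ ω κ : ℕ → ℕ → ℝ)

private lemma key_alg (θ : ℕ → ℕ → ℝ) (ω : ℕ → ℝ) (κ : ℕ → ℕ → ℝ)
    (hθ_symm : ∀ i j : ℕ, 1 ≤ i → 1 ≤ j → θ i j = θ j i)
    (hK1 : ∀ i j : ℕ, 1 ≤ i → 1 ≤ j → θ i j = ω i * ω j + κ i j)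
    (hω_nonneg : ∀ i : ℕ, 1 ≤ i → 0 ≤ ω i)
    (hκ_nonneg : ∀ i j : ℕ, 1 ≤ i → 1 ≤ j → 0 ≤ κ i j)
    (n : ℕ) (x : ℕ → ℝ) (hx : ∀ i ∈ Finset.Icc 1 n, 0 ≤ x i) :
    (∑ i ∈ Finset.Icc 1 n, ((∑ j ∈ Finset.Icc 1 (n - i), θ (i + j) j * x (i + j) * x j)
        - ∑ j ∈ Finset.Icc 1 n, θ i j * x i * x j))
      + (1 / 2) * (∑ i ∈ Finset.Icc 1 n, ω i * x i) ^ 2 ≤ 0 := by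
  have hθnn : ∀ i j : ℕ, 1 ≤ i → 1 ≤ j → 0 ≤ θ i j := fun i j hi hj => by
    rw [hK1 i j hi hj]
    have := hω_nonneg i hi; have := hω_nonneg j hj; have := hκ_nonneg i j hi hj
    positivity
  set G : ℕ → ℕ → ℝ := fun k j => θ k j * x k * x j with hG
  have hGnn : ∀ k ∈ Finset.Icc 1 n, ∀ j ∈ Finset.Icc 1 n, 0 ≤ G k j := by
    intro k hk j hj
    simp only [Finset.mem_Icc] at hk hj
    exact mul_nonneg (mul_nonneg (hθnn k j hk.1 hj.1) (hx k (by simp [Finset.mem_Icc]; omega)))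
      (hx j (by simp [Finset.mem_Icc]; omega))
  rw [Finset.sum_sub_distrib]
  have h1 : ∑ i ∈ Finset.Icc 1 n, ∑ j ∈ Finset.Icc 1 (n - i), θ (i + j) j * x (i + j) * x j
      = ∑ k ∈ Finset.Icc 1 n, ∑ j ∈ Finset.Icc 1 (k - 1), G k j := tri_reindex n G
  set A := ∑ k ∈ Finset.Icc 1 n, ∑ j ∈ Finset.Icc 1 (k - 1), G k j with hA
  set S := ∑ k ∈ Finset.Icc 1 n, ∑ j ∈ Finset.Icc 1 n, G k j with hS
  -- 2A ≤ S
  have hGsymm : ∀ i j : ℕ, 1 ≤ i → 1 ≤ j → G i j = G j i := by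
    intro i j hi hj
    simp only [hG]
    rw [hθ_symm i j hi hj]; ring
  have h2 : A + A ≤ S := by
    rw [hA, hS]
    nth_rewrite 2 [swap_reindex n G hGsymm]
    rw [← Finset.sum_add_distrib]
    apply Finset.sum_le_sum
    intro k hk
    rw [← Finset.sum_union]
    · apply Finset.sum_le_sum_of_subset_of_nonneg
      · intro j hj
        simp only [Finset.mem_union, Finset.mem_Icc] at *
        omega
      · intro j hj _
        exact hGnn k hk j hj
    · rw [Finset.disjoint_left]
      intro j hj hj'
      simp only [Finset.mem_Icc] at *
      omega
  -- φ² ≤ S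
  have h3 : (∑ i ∈ Finset.Icc 1 n, ω i * x i) ^ 2 ≤ S := by
    rw [sq, Finset.sum_mul_sum]
    apply Finset.sum_le_sum
    intro i hi
    apply Finset.sum_le_sum
    intro j hj
    simp only [Finset.mem_Icc] at hi hj
    simp only [hG]
    rw [hK1 i j hi.1 hj.1]
    have hxi := hx i (by simp [Finset.mem_Icc]; omega)
    have hxj := hx j (by simp [Finset.mem_Icc]; omega)
    have hκij := hκ_nonneg i j hi.1 hj.1
    nlinarith [mul_nonneg (mul_nonneg hκij hxi) hxj]
  rw [h1]
  linarith
end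

/-- Under (K1) (`θ_{i,j} = ω_i ω_j + κ_{i,j}` with `ω, κ ≥ 0`, `κ` symmetric),
the nonnegative global solution of the truncated RBK system satisfies
`∑_{i=1}^n f_i(t) + (1/2) ∫_0^t (∑_{i=1}^n ω_i f_i(s))² ds ≤ ∑_{i=1}^n fin_i`. -/
theorem truncRBK_zeroth_moment_estimate
    (θ : ℕ → ℕ → ℝ) (ω : ℕ → ℝ) (κ : ℕ → ℕ → ℝ)
    (hθ_symm : ∀ i j : ℕ, 1 ≤ i → 1 ≤ j → θ i j = θ j i)
    -- (K1)
    (hK1 : ∀ i j : ℕ, 1 ≤ i → 1 ≤ j → θ i j = ω i * ω j + κ i j)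
    (hω_nonneg : ∀ i : ℕ, 1 ≤ i → 0 ≤ ω i)
    (hκ_nonneg : ∀ i j : ℕ, 1 ≤ i → 1 ≤ j → 0 ≤ κ i j)
    (hκ_symm : ∀ i j : ℕ, 1 ≤ i → 1 ≤ j → κ i j = κ j i)
    (n : ℕ) (hn : 2 ≤ n)
    (fin : ℕ → ℝ) (hfin : ∀ i ∈ Finset.Icc 1 n, 0 ≤ fin i)
    (f : ℕ → ℝ → ℝ) (hf : IsTruncRBKOn θ n (Set.Ici 0) f)
    (hinit : ∀ i ∈ Finset.Icc 1 n, f i 0 = fin i)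
    (hf_nonneg : ∀ i ∈ Finset.Icc 1 n, ∀ t ∈ Set.Ici (0:ℝ), 0 ≤ f i t)
    (t : ℝ) (ht : 0 ≤ t) :
    ∑ i ∈ Finset.Icc 1 n, f i t
      + (1 / 2) * ∫ s in (0:ℝ)..t, (∑ i ∈ Finset.Icc 1 n, ω i * f i s) ^ 2
      ≤ ∑ i ∈ Finset.Icc 1 n, fin i := by
  -- continuity of each f i on [0, ∞)
  have hcont : ∀ i ∈ Finset.Icc 1 n, ContinuousOn (f i) (Set.Ici 0) := by
    intro i hi x hx
    exact (hf i hi x hx).differentiableWithinAt.continuousWithinAt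
  -- the extended (globally continuous) integrand
  set h : ℝ → ℝ := fun s => (∑ i ∈ Finset.Icc 1 n, ω i * f i (max s 0)) ^ 2 with hh
  have hmax : Continuous fun s : ℝ => max s 0 := continuous_id.max continuous_const
  have hcomp : ∀ i ∈ Finset.Icc 1 n, Continuous fun s : ℝ => f i (max s 0) := by
    intro i hi
    exact (hcont i hi).comp_continuous hmax (fun x => le_max_right x 0)
  have hhc : Continuous h := by
    apply Continuous.pow
    exact continuous_finset_sum _ fun i hi => continuous_const.mul (hcomp i hi)
  -- primitive of h
  set P : ℝ → ℝ := fun u => ∫ s in (0:ℝ)..u, h s with hP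
  have hPderiv : ∀ x : ℝ, HasDerivAt P (h x) x := by
    intro x
    exact intervalIntegral.integral_hasDerivAt_right (hhc.intervalIntegrable 0 x)
      (hhc.stronglyMeasurableAtFilter _ _) hhc.continuousAt
  -- the combined function
  set g : ℝ → ℝ := fun u => (∑ i ∈ Finset.Icc 1 n, f i u) + (1 / 2) * P u with hg
  -- derivative of g within Ici 0
  have hgderiv : ∀ x ∈ Set.Ici (0:ℝ),
      HasDerivWithinAt g
        ((∑ i ∈ Finset.Icc 1 n,
            ((∑ j ∈ Finset.Icc 1 (n - i), θ (i + j) j * f (i + j) x * f j x)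
              - ∑ j ∈ Finset.Icc 1 n, θ i j * f i x * f j x))
          + (1 / 2) * h x) (Set.Ici 0) x := by
    intro x hx
    exact (HasDerivWithinAt.fun_sum fun i hi => hf i hi x hx).add
      (((hPderiv x).hasDerivWithinAt).const_mul (1 / 2))
  -- nonpositivity of the derivative on Ici 0
  have hgderiv_le : ∀ x ∈ Set.Ici (0:ℝ),
      (∑ i ∈ Finset.Icc 1 n,
          ((∑ j ∈ Finset.Icc 1 (n - i), θ (i + j) j * f (i + j) x * f j x)
            - ∑ j ∈ Finset.Icc 1 n, θ i j * f i x * f j x))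
        + (1 / 2) * h x ≤ 0 := by
    intro x hx
    have hx' : max x 0 = x := max_eq_left hx
    have := key_alg θ ω κ hθ_symm hK1 hω_nonneg hκ_nonneg n (fun i => f i x)
      (fun i hi => hf_nonneg i hi x hx)
    simpa [hh, hx'] using this
  -- g is antitone on Ici 0
  have hganti : AntitoneOn g (Set.Ici 0) := by
    apply antitoneOn_of_deriv_nonpos (convex_Ici 0)
    · -- continuity
      apply ContinuousOn.add
      · exact continuousOn_finset_sum _ fun i hi => hcont i hi
      · exact (continuous_const.mul (intervalIntegral.continuous_primitive
          (fun a b => hhc.intervalIntegrable a b) 0)).continuousOn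
    · -- differentiability on the interior
      intro x hx
      rw [interior_Ici] at hx
      exact ((hgderiv x (Set.mem_Ici.mpr (le_of_lt (Set.mem_Ioi.mp hx)))).hasDerivAt
        (Ici_mem_nhds hx)).differentiableAt.differentiableWithinAt
    · -- nonpositive derivative on the interior
      intro x hx
      rw [interior_Ici] at hx
      rw [((hgderiv x (Set.mem_Ici.mpr (le_of_lt (Set.mem_Ioi.mp hx)))).hasDerivAt (Ici_mem_nhds hx)).deriv]
      exact hgderiv_le x (Set.mem_Ici.mpr (le_of_lt (Set.mem_Ioi.mp hx)))
  have hkey : g t ≤ g 0 := hganti Set.self_mem_Ici ht ht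
  have hg0 : g 0 = ∑ i ∈ Finset.Icc 1 n, fin i := by
    simp only [hg, hP, intervalIntegral.integral_same, mul_zero, add_zero]
    exact Finset.sum_congr rfl hinit
  have hgt : g t = ∑ i ∈ Finset.Icc 1 n, f i t
      + (1 / 2) * ∫ s in (0:ℝ)..t, (∑ i ∈ Finset.Icc 1 n, ω i * f i s) ^ 2 := by
    simp only [hg, hP]
    congr 1
    congr 1
    apply intervalIntegral.integral_congr
    intro s hs
    rw [Set.uIcc_of_le ht] at hs
    simp only [hh]
    rw [max_eq_left hs.1]
  rw [hgt, hg0] at hkey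
  exact hkey
end

section
/- Let n ≥ 2, let (θ_{i,j})_{i,j≥1} be a coagulation kernel, and let f^n = (f_i^n)_{1≤i≤n} be the nonnegative global solution of the truncated RBK system with nonnegative initial data. Then for all 0 ≤ t1 ≤ t2 < ∞, Σ_{i=1}^{n} i^{1/2} f_i^n(t2) + (1/2) ∫_{t1}^{t2} Σ_{i=1}^{n} Σ_{j=1}^{n} min{i,j}^{1/2} θ_{i,j} f_i^n(s) f_j^n(s) ds ≤ Σ_{i=1}^{n} i^{1/2} f_i^n(t1); in particular t ↦ Σ_{i=1}^{n} i^{1/2} f_i^n(t) is nonincreasing. -/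
open MeasureTheory Finset Filter

lemma rbk_reindex (n : ℕ) (T : ℕ → ℕ → ℝ) (w : ℕ → ℝ) :
    ∑ i ∈ Finset.Icc 1 n, ∑ j ∈ Finset.Icc 1 (n - i), w i * T (i + j) j
    = ∑ i ∈ Finset.Icc 1 n, ∑ j ∈ Finset.Icc 1 n,
        (if j < i then w (i - j) * T i j else 0) := by
  have h1 : ∀ i ∈ Finset.Icc 1 n,
      ∑ j ∈ Finset.Icc 1 n, (if j < i then w (i - j) * T i j else 0)
      = ∑ j ∈ Finset.Icc 1 (i - 1), w (i - j) * T i j := by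
    intro i hi
    rw [← Finset.sum_filter]
    apply Finset.sum_congr _ (fun _ _ => rfl)
    ext j
    simp only [Finset.mem_filter, Finset.mem_Icc] at *
    omega
  rw [Finset.sum_congr rfl h1]
  rw [Finset.sum_sigma' (Finset.Icc 1 n) (fun i => Finset.Icc 1 (n - i))
    (fun i j => w i * T (i + j) j),
    Finset.sum_sigma' (Finset.Icc 1 n) (fun k => Finset.Icc 1 (k - 1))
    (fun k j => w (k - j) * T k j)]
  refine Finset.sum_nbij' (fun x => ⟨x.1 + x.2, x.2⟩) (fun x => ⟨x.1 - x.2, x.2⟩)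
    ?_ ?_ ?_ ?_ ?_
  all_goals rintro ⟨i, j⟩ h
  all_goals simp only [Finset.mem_sigma, Finset.mem_Icc] at h
  all_goals dsimp only
  · simp only [Finset.mem_sigma, Finset.mem_Icc]
    omega
  · simp only [Finset.mem_sigma, Finset.mem_Icc]
    omega
  · simp only [Sigma.mk.inj_iff, heq_eq_eq, and_true]
    omega
  · simp only [Sigma.mk.inj_iff, heq_eq_eq, and_true]
    omega
  · rw [Nat.add_sub_cancel]

lemma rbk_key_ineq (θ : ℕ → ℕ → ℝ)
    (hθ_nonneg : ∀ i j : ℕ, 1 ≤ i → 1 ≤ j → 0 ≤ θ i j)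
    (hθ_symm : ∀ i j : ℕ, 1 ≤ i → 1 ≤ j → θ i j = θ j i)
    (n : ℕ) (a : ℕ → ℝ) (ha : ∀ i ∈ Finset.Icc 1 n, 0 ≤ a i) :
    ∑ i ∈ Finset.Icc 1 n, Real.sqrt i *
        ((∑ j ∈ Finset.Icc 1 (n - i), θ (i + j) j * a (i + j) * a j)
          - ∑ j ∈ Finset.Icc 1 n, θ i j * a i * a j)
      ≤ -(1 / 2) * ∑ i ∈ Finset.Icc 1 n, ∑ j ∈ Finset.Icc 1 n,
          Real.sqrt (min (i : ℝ) j) * θ i j * a i * a j := by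
  set S := Finset.Icc 1 n with hS
  -- symmetry of the quadratic term
  have hsym : ∀ i ∈ S, ∀ j ∈ S, θ j i * a j * a i = θ i j * a i * a j := by
    intro i hi j hj
    rw [Finset.mem_Icc] at hi hj
    rw [hθ_symm j i hj.1 hi.1]; ring
  -- first term reindexed
  have hA : ∑ i ∈ S, Real.sqrt i * ∑ j ∈ Finset.Icc 1 (n - i), θ (i + j) j * a (i + j) * a j
      = ∑ i ∈ S, ∑ j ∈ S,
          (if j < i then Real.sqrt ((i - j : ℕ)) * (θ i j * a i * a j) else 0) := by
    have := rbk_reindex n (fun i j => θ i j * a i * a j) (fun m => Real.sqrt m)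
    simpa only [Finset.mul_sum, mul_assoc] using this
  have hA' : ∑ i ∈ S, ∑ j ∈ S,
        (if j < i then Real.sqrt ((i - j : ℕ)) * (θ i j * a i * a j) else 0)
      = ∑ i ∈ S, ∑ j ∈ S,
        (if i < j then Real.sqrt ((j - i : ℕ)) * (θ i j * a i * a j) else 0) := by
    rw [Finset.sum_comm]
    refine Finset.sum_congr rfl fun i hi => Finset.sum_congr rfl fun j hj => ?_
    rw [hsym i hi j hj]
  have hB : ∑ i ∈ S, Real.sqrt i * ∑ j ∈ S, θ i j * a i * a j
      = ∑ i ∈ S, ∑ j ∈ S, Real.sqrt i * (θ i j * a i * a j) := by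
    simp only [Finset.mul_sum]
  have hB' : ∑ i ∈ S, ∑ j ∈ S, Real.sqrt i * (θ i j * a i * a j)
      = ∑ i ∈ S, ∑ j ∈ S, Real.sqrt j * (θ i j * a i * a j) := by
    rw [Finset.sum_comm]
    refine Finset.sum_congr rfl fun i hi => Finset.sum_congr rfl fun j hj => ?_
    rw [hsym i hi j hj]
  -- core termwise inequality
  have hsum : ∑ i ∈ S, ∑ j ∈ S,
        ((if j < i then Real.sqrt ((i - j : ℕ)) * (θ i j * a i * a j) else 0)
          + (if i < j then Real.sqrt ((j - i : ℕ)) * (θ i j * a i * a j) else 0)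
          + Real.sqrt (min (i : ℝ) j) * θ i j * a i * a j)
      ≤ ∑ i ∈ S, ∑ j ∈ S,
        (Real.sqrt i * (θ i j * a i * a j) + Real.sqrt j * (θ i j * a i * a j)) := by
    refine Finset.sum_le_sum fun i hi => Finset.sum_le_sum fun j hj => ?_
    have hi' := Finset.mem_Icc.mp hi
    have hj' := Finset.mem_Icc.mp hj
    have hX : 0 ≤ θ i j * a i * a j :=
      mul_nonneg (mul_nonneg (hθ_nonneg i j hi'.1 hj'.1) (ha i hi)) (ha j hj)
    rcases lt_trichotomy i j with h | h | h
    · rw [if_neg (by omega), if_pos h]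
      have hmin : min (i : ℝ) j = (i : ℝ) :=
        min_eq_left (by exact_mod_cast h.le)
      have hs1 : Real.sqrt ((j - i : ℕ)) ≤ Real.sqrt j :=
        Real.sqrt_le_sqrt (by exact_mod_cast Nat.sub_le j i)
      have hs2 : (0:ℝ) ≤ Real.sqrt i := Real.sqrt_nonneg _
      rw [hmin]
      nlinarith [Real.sqrt_nonneg ((j - i : ℕ) : ℝ)]
    · subst h
      simp only [lt_irrefl, if_false, min_self]
      nlinarith [Real.sqrt_nonneg (i : ℝ), hX]
    · rw [if_pos h, if_neg (by omega)]
      have hmin : min (i : ℝ) j = (j : ℝ) :=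
        min_eq_right (by exact_mod_cast h.le)
      have hs1 : Real.sqrt ((i - j : ℕ)) ≤ Real.sqrt i :=
        Real.sqrt_le_sqrt (by exact_mod_cast Nat.sub_le i j)
      rw [hmin]
      nlinarith [Real.sqrt_nonneg ((i - j : ℕ) : ℝ), Real.sqrt_nonneg (j : ℝ)]
  -- split the combined sums
  simp only [Finset.sum_add_distrib] at hsum
  have hexp : ∑ i ∈ S, Real.sqrt i *
        ((∑ j ∈ Finset.Icc 1 (n - i), θ (i + j) j * a (i + j) * a j)
          - ∑ j ∈ S, θ i j * a i * a j)
      = (∑ i ∈ S, Real.sqrt i * ∑ j ∈ Finset.Icc 1 (n - i), θ (i + j) j * a (i + j) * a j)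
        - ∑ i ∈ S, Real.sqrt i * ∑ j ∈ S, θ i j * a i * a j := by
    rw [← Finset.sum_sub_distrib]
    exact Finset.sum_congr rfl fun i _ => by ring
  rw [hexp, hA, hB]
  linarith [hsum, hA', hB']
/-- For the nonnegative global solution of the truncated RBK system,
`∑_{i=1}^n √i f_i(t2) + (1/2) ∫_{t1}^{t2} ∑_{i=1}^n ∑_{j=1}^n √(min i j) θ_{i,j} f_i f_j ds
   ≤ ∑_{i=1}^n √i f_i(t1)`; in particular `t ↦ ∑_{i=1}^n √i f_i(t)` is nonincreasing. -/
theorem truncRBK_half_moment_estimate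
    (θ : ℕ → ℕ → ℝ)
    (hθ_nonneg : ∀ i j : ℕ, 1 ≤ i → 1 ≤ j → 0 ≤ θ i j)
    (hθ_symm : ∀ i j : ℕ, 1 ≤ i → 1 ≤ j → θ i j = θ j i)
    (n : ℕ) (hn : 2 ≤ n)
    (fin : ℕ → ℝ) (hfin : ∀ i ∈ Finset.Icc 1 n, 0 ≤ fin i)
    (f : ℕ → ℝ → ℝ) (hf : IsTruncRBKOn θ n (Set.Ici 0) f)
    (hinit : ∀ i ∈ Finset.Icc 1 n, f i 0 = fin i)
    (hf_nonneg : ∀ i ∈ Finset.Icc 1 n, ∀ t ∈ Set.Ici (0:ℝ), 0 ≤ f i t)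
    (t1 t2 : ℝ) (ht1 : 0 ≤ t1) (ht12 : t1 ≤ t2) :
    (∑ i ∈ Finset.Icc 1 n, Real.sqrt i * f i t2
        + (1 / 2) * ∫ s in t1..t2,
            ∑ i ∈ Finset.Icc 1 n, ∑ j ∈ Finset.Icc 1 n,
              Real.sqrt (min i j) * θ i j * f i s * f j s
      ≤ ∑ i ∈ Finset.Icc 1 n, Real.sqrt i * f i t1)
    ∧ (∑ i ∈ Finset.Icc 1 n, Real.sqrt i * f i t2
        ≤ ∑ i ∈ Finset.Icc 1 n, Real.sqrt i * f i t1) := by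
  have hfc : ∀ i ∈ Finset.Icc 1 n, ContinuousOn (f i) (Set.Ici 0) :=
    fun i hi t ht => (hf i hi t ht).continuousWithinAt
  set D : ℕ → ℝ → ℝ := fun i t =>
    (∑ j ∈ Finset.Icc 1 (n - i), θ (i + j) j * f (i + j) t * f j t)
      - ∑ j ∈ Finset.Icc 1 n, θ i j * f i t * f j t with hD
  set G : ℝ → ℝ := fun t => ∑ i ∈ Finset.Icc 1 n, Real.sqrt i * f i t with hG
  set G' : ℝ → ℝ := fun t => ∑ i ∈ Finset.Icc 1 n, Real.sqrt i * D i t with hG'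
  set H : ℝ → ℝ := fun t => ∑ i ∈ Finset.Icc 1 n, ∑ j ∈ Finset.Icc 1 n,
      Real.sqrt (min (i:ℝ) j) * θ i j * f i t * f j t with hH
  have hder : ∀ t ∈ Set.Ici (0:ℝ), HasDerivWithinAt G (G' t) (Set.Ici 0) t := by
    intro t ht
    exact HasDerivWithinAt.fun_sum fun i hi => (hf i hi t ht).const_mul _
  have hDcont : ∀ i ∈ Finset.Icc 1 n, ContinuousOn (D i) (Set.Ici 0) := by
    intro i hi
    have hi' := Finset.mem_Icc.mp hi
    apply ContinuousOn.sub
    · refine continuousOn_finset_sum _ fun j hj => ?_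
      have hj' := Finset.mem_Icc.mp hj
      exact (continuousOn_const.mul
          (hfc (i + j) (Finset.mem_Icc.mpr ⟨by omega, by omega⟩))).mul
        (hfc j (Finset.mem_Icc.mpr ⟨by omega, by omega⟩))
    · refine continuousOn_finset_sum _ fun j hj => ?_
      exact (continuousOn_const.mul (hfc i hi)).mul (hfc j hj)
  have hG'cont : ContinuousOn G' (Set.Ici 0) :=
    continuousOn_finset_sum _ fun i hi => continuousOn_const.mul (hDcont i hi)
  have hHcont : ContinuousOn H (Set.Ici 0) := by
    refine continuousOn_finset_sum _ fun i hi => continuousOn_finset_sum _ fun j hj => ?_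
    exact (continuousOn_const.mul (hfc i hi)).mul (hfc j hj)
  have hGcont : ContinuousOn G (Set.Ici 0) :=
    fun t ht => (hder t ht).continuousWithinAt
  have hsub : Set.Icc t1 t2 ⊆ Set.Ici (0:ℝ) := fun x hx => le_trans ht1 hx.1
  have hIoi : ∀ x ∈ Set.Ioo t1 t2, HasDerivWithinAt G (G' x) (Set.Ioi x) x := by
    intro x hx
    exact (hder x (le_trans ht1 hx.1.le)).mono
      (fun y hy => le_trans (le_trans ht1 hx.1.le) (le_of_lt hy))
  have hintG' : IntervalIntegrable G' volume t1 t2 :=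
    ContinuousOn.intervalIntegrable_of_Icc ht12 (hG'cont.mono hsub)
  have hintH : IntervalIntegrable H volume t1 t2 :=
    ContinuousOn.intervalIntegrable_of_Icc ht12 (hHcont.mono hsub)
  have hftc : ∫ s in t1..t2, G' s = G t2 - G t1 :=
    intervalIntegral.integral_eq_sub_of_hasDeriv_right_of_le ht12 (hGcont.mono hsub)
      hIoi hintG'
  have hptwise : ∀ s ∈ Set.Icc t1 t2, G' s ≤ -(1 / 2) * H s := by
    intro s hs
    exact rbk_key_ineq θ hθ_nonneg hθ_symm n (fun i => f i s)
      (fun i hi => hf_nonneg i hi s (hsub hs))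
  have hmono : ∫ s in t1..t2, G' s ≤ ∫ s in t1..t2, -(1 / 2) * H s :=
    intervalIntegral.integral_mono_on ht12 hintG' (hintH.const_mul _) hptwise
  rw [intervalIntegral.integral_const_mul] at hmono
  have hH0 : ∀ s ∈ Set.Icc t1 t2, 0 ≤ H s := by
    intro s hs
    refine Finset.sum_nonneg fun i hi => Finset.sum_nonneg fun j hj => ?_
    have hi' := Finset.mem_Icc.mp hi
    have hj' := Finset.mem_Icc.mp hj
    exact mul_nonneg (mul_nonneg (mul_nonneg (Real.sqrt_nonneg _)
        (hθ_nonneg i j hi'.1 hj'.1)) (hf_nonneg i hi s (hsub hs)))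
      (hf_nonneg j hj s (hsub hs))
  have hHnn : 0 ≤ ∫ s in t1..t2, H s := intervalIntegral.integral_nonneg ht12 hH0
  constructor
  · linarith [hftc, hmono]
  · linarith [hftc, hmono, hHnn]
end

section
/- Let n ≥ 2, let (θ_{i,j})_{i,j≥1} be a coagulation kernel satisfying (K1), and let f^n = (f_i^n)_{1≤i≤n} be the nonnegative global solution of the truncated RBK system with nonnegative initial data. Then for all 1 ≤ r1 ≤ r2 ≤ n and 0 ≤ t1 ≤ t2 < ∞, ∫_{t1}^{t2} ( Σ_{i=r1}^{r2} ω_i f_i^n(s) )^2 ds ≤ 2 r1^{−1/2} Σ_{i=1}^{n} i^{1/2} f_i^n(t1). -/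
open MeasureTheory Finset Filter

section RBKAux
open Finset

lemma rbk_reindex_s8 (n : ℕ) (G : ℕ → ℕ → ℝ) :
    ∑ i ∈ Icc 1 n, ∑ j ∈ Icc 1 (n - i), G i j
      = ∑ k ∈ Icc 1 n, ∑ j ∈ Icc 1 (k - 1), G (k - j) j := by
  rw [Finset.sum_sigma', Finset.sum_sigma']
  apply Finset.sum_nbij' (i := fun p => (⟨p.1 + p.2, p.2⟩ : Σ _ : ℕ, ℕ))
    (j := fun p => (⟨p.1 - p.2, p.2⟩ : Σ _ : ℕ, ℕ))
  · intro a ha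
    simp only [Finset.mem_sigma, Finset.mem_Icc] at ha ⊢
    omega
  · intro a ha
    simp only [Finset.mem_sigma, Finset.mem_Icc] at ha ⊢
    omega
  · intro a ha
    obtain ⟨i, j⟩ := a
    simp only [Finset.mem_sigma, Finset.mem_Icc] at ha
    exact Sigma.ext (by show i + j - j = i; omega) (HEq.refl _)
  · intro a ha
    obtain ⟨k, j⟩ := a
    simp only [Finset.mem_sigma, Finset.mem_Icc] at ha
    exact Sigma.ext (by show k - j + j = k; omega) (HEq.refl _)
  · intro a ha
    simp only [Finset.mem_sigma, Finset.mem_Icc] at ha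
    have : a.1 + a.2 - a.2 = a.1 := by omega
    rw [this]

lemma rbk_swap (a b : ℕ) (ha : 1 ≤ a) (G : ℕ → ℕ → ℝ) :
    ∑ i ∈ Icc a b, ∑ j ∈ Icc (i + 1) b, G i j
      = ∑ k ∈ Icc a b, ∑ j ∈ Icc a (k - 1), G j k := by
  rw [Finset.sum_sigma', Finset.sum_sigma']
  apply Finset.sum_nbij' (i := fun p => (⟨p.2, p.1⟩ : Σ _ : ℕ, ℕ))
    (j := fun p => (⟨p.2, p.1⟩ : Σ _ : ℕ, ℕ))
  · intro p hp; simp only [Finset.mem_sigma, Finset.mem_Icc] at hp ⊢; omega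
  · intro p hp; simp only [Finset.mem_sigma, Finset.mem_Icc] at hp ⊢; omega
  · intro p hp; rfl
  · intro p hp; rfl
  · intro p hp; rfl

lemma rbk_split (a b i : ℕ) (ha : 1 ≤ a) (hai : a ≤ i) (hib : i ≤ b) (h : ℕ → ℝ) :
    ∑ j ∈ Icc a b, h j
      = (∑ j ∈ Icc a (i - 1), h j) + h i + ∑ j ∈ Icc (i + 1) b, h j := by
  have h1 : Icc a b = Icc a (i - 1) ∪ Icc i b := by
    ext j; simp only [Finset.mem_union, Finset.mem_Icc]; omega
  have h2 : Disjoint (Icc a (i - 1)) (Icc i b) := by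
    rw [Finset.disjoint_left]; intro j hj hj'
    simp only [Finset.mem_Icc] at hj hj'; omega
  have h3 : Icc i b = insert i (Icc (i + 1) b) := by
    ext j; simp only [Finset.mem_insert, Finset.mem_Icc]; omega
  have h4 : i ∉ Icc (i + 1) b := by simp
  rw [h1, Finset.sum_union h2, h3, Finset.sum_insert h4]
  ring


lemma rbk_key (θ : ℕ → ℕ → ℝ) (ω : ℕ → ℝ) (κ : ℕ → ℕ → ℝ)
    (hθ_symm : ∀ i j : ℕ, 1 ≤ i → 1 ≤ j → θ i j = θ j i)
    (hK1 : ∀ i j : ℕ, 1 ≤ i → 1 ≤ j → θ i j = ω i * ω j + κ i j)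
    (hω_nonneg : ∀ i : ℕ, 1 ≤ i → 0 ≤ ω i)
    (hκ_nonneg : ∀ i j : ℕ, 1 ≤ i → 1 ≤ j → 0 ≤ κ i j)
    (n r1 r2 : ℕ) (hr1 : 1 ≤ r1) (hr12 : r1 ≤ r2) (hr2n : r2 ≤ n)
    (x : ℕ → ℝ) (hx : ∀ i, 1 ≤ i → i ≤ n → 0 ≤ x i) :
    ∑ i ∈ Icc 1 n, Real.sqrt i *
        ((∑ j ∈ Icc 1 (n - i), θ (i + j) j * x (i + j) * x j)
          - ∑ j ∈ Icc 1 n, θ i j * x i * x j)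
      ≤ -(Real.sqrt r1 / 2 * (∑ i ∈ Icc r1 r2, ω i * x i) ^ 2) := by
  have hθ0 : ∀ i j, 1 ≤ i → 1 ≤ j → 0 ≤ θ i j := fun i j hi hj => by
    rw [hK1 i j hi hj]
    exact add_nonneg (mul_nonneg (hω_nonneg i hi) (hω_nonneg j hj)) (hκ_nonneg i j hi hj)
  have hθω : ∀ i j, 1 ≤ i → 1 ≤ j → ω i * ω j ≤ θ i j := fun i j hi hj => by
    rw [hK1 i j hi hj]; nlinarith [hκ_nonneg i j hi hj]
  set φ : ℕ → ℝ := fun i => Real.sqrt i with hφ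
  have hφ0 : ∀ i : ℕ, 0 ≤ φ i := fun i => Real.sqrt_nonneg _
  -- nonnegativity of a typical term
  have hterm0 : ∀ k j, 1 ≤ k → k ≤ n → 1 ≤ j → j ≤ n → 0 ≤ θ k j * x k * x j :=
    fun k j hk hkn hj hjn =>
      mul_nonneg (mul_nonneg (hθ0 k j hk hj) (hx k hk hkn)) (hx j hj hjn)
  -- abbreviations
  set A' : ℝ := ∑ k ∈ Icc 1 n, ∑ j ∈ Icc 1 (k - 1), φ k * (θ k j * x k * x j) with hA'def
  set P : ℝ := ∑ k ∈ Icc 1 n, ∑ j ∈ Icc 1 (k - 1), φ j * (θ k j * x k * x j) with hPdef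
  set Q : ℝ := ∑ i ∈ Icc 1 n, φ i * (θ i i * x i * x i) with hQdef
  -- rewrite LHS as A - B
  have hLHS : ∑ i ∈ Icc 1 n, Real.sqrt i *
        ((∑ j ∈ Icc 1 (n - i), θ (i + j) j * x (i + j) * x j)
          - ∑ j ∈ Icc 1 n, θ i j * x i * x j)
      = (∑ i ∈ Icc 1 n, ∑ j ∈ Icc 1 (n - i), φ i * (θ (i + j) j * x (i + j) * x j))
        - ∑ i ∈ Icc 1 n, ∑ j ∈ Icc 1 n, φ i * (θ i j * x i * x j) := by
    rw [← Finset.sum_sub_distrib]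
    apply Finset.sum_congr rfl
    intro i _
    rw [mul_sub, Finset.mul_sum, Finset.mul_sum]
  rw [hLHS]
  -- gain term: reindex then bound by A'
  have hA : (∑ i ∈ Icc 1 n, ∑ j ∈ Icc 1 (n - i), φ i * (θ (i + j) j * x (i + j) * x j))
      = ∑ k ∈ Icc 1 n, ∑ j ∈ Icc 1 (k - 1), φ (k - j) * (θ k j * x k * x j) := by
    rw [rbk_reindex_s8 n (fun i j => φ i * (θ (i + j) j * x (i + j) * x j))]
    apply Finset.sum_congr rfl
    intro k hk
    apply Finset.sum_congr rfl
    intro j hj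
    simp only [Finset.mem_Icc] at hk hj
    have : k - j + j = k := by omega
    rw [this]
  have hAA' : (∑ i ∈ Icc 1 n, ∑ j ∈ Icc 1 (n - i), φ i * (θ (i + j) j * x (i + j) * x j)) ≤ A' := by
    rw [hA, hA'def]
    apply Finset.sum_le_sum
    intro k hk
    apply Finset.sum_le_sum
    intro j hj
    simp only [Finset.mem_Icc] at hk hj
    apply mul_le_mul_of_nonneg_right _ (hterm0 k j hk.1 hk.2 hj.1 (by omega))
    apply Real.sqrt_le_sqrt
    exact_mod_cast Nat.sub_le k j
  -- loss term splits as A' + P + Q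
  have hB : (∑ i ∈ Icc 1 n, ∑ j ∈ Icc 1 n, φ i * (θ i j * x i * x j)) = A' + P + Q := by
    have step : ∀ i ∈ Icc 1 n,
        (∑ j ∈ Icc 1 n, φ i * (θ i j * x i * x j))
          = (∑ j ∈ Icc 1 (i - 1), φ i * (θ i j * x i * x j))
            + φ i * (θ i i * x i * x i)
            + ∑ j ∈ Icc (i + 1) n, φ i * (θ i j * x i * x j) := by
      intro i hi
      simp only [Finset.mem_Icc] at hi
      exact rbk_split 1 n i le_rfl hi.1 hi.2 _
    rw [Finset.sum_congr rfl step]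
    rw [Finset.sum_add_distrib, Finset.sum_add_distrib]
    have hup : (∑ i ∈ Icc 1 n, ∑ j ∈ Icc (i + 1) n, φ i * (θ i j * x i * x j)) = P := by
      rw [rbk_swap 1 n le_rfl (fun i j => φ i * (θ i j * x i * x j))]
      rw [hPdef]
      apply Finset.sum_congr rfl
      intro k hk
      apply Finset.sum_congr rfl
      intro j hj
      simp only [Finset.mem_Icc] at hk hj
      rw [hθ_symm j k hj.1 hk.1]
      ring
    rw [hup, ← hA'def, ← hQdef]
    ring
  rw [hB]
  -- Now: A'' - (A' + P + Q) ≤ -(c G²), with A'' ≤ A'.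
  have hPQ : Real.sqrt r1 / 2 * (∑ i ∈ Icc r1 r2, ω i * x i) ^ 2 ≤ P + Q := by
    set I := Icc r1 r2 with hI
    have hsq : (∑ i ∈ I, ω i * x i) ^ 2
        = ∑ i ∈ I, ∑ j ∈ I, (ω i * x i) * (ω j * x j) := by
      rw [sq, Finset.sum_mul_sum]
    have hsplit : ∀ i ∈ I,
        (∑ j ∈ I, (ω i * x i) * (ω j * x j))
          = (∑ j ∈ Icc r1 (i - 1), (ω i * x i) * (ω j * x j))
            + (ω i * x i) * (ω i * x i)
            + ∑ j ∈ Icc (i + 1) r2, (ω i * x i) * (ω j * x j) := by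
      intro i hi
      simp only [hI, Finset.mem_Icc] at hi
      exact rbk_split r1 r2 i hr1 hi.1 hi.2 _
    set L : ℝ := ∑ k ∈ I, ∑ j ∈ Icc r1 (k - 1), (ω k * x k) * (ω j * x j) with hLdef
    set Dg : ℝ := ∑ i ∈ I, (ω i * x i) * (ω i * x i) with hDgdef
    have hG2 : (∑ i ∈ I, ω i * x i) ^ 2 = 2 * L + Dg := by
      rw [hsq, Finset.sum_congr rfl hsplit, Finset.sum_add_distrib, Finset.sum_add_distrib]
      have : (∑ i ∈ I, ∑ j ∈ Icc (i + 1) r2, (ω i * x i) * (ω j * x j)) = L := by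
        rw [hI, rbk_swap r1 r2 hr1 (fun i j => (ω i * x i) * (ω j * x j)), hLdef]
        apply Finset.sum_congr rfl
        intro k _
        apply Finset.sum_congr rfl
        intro j _
        ring
      rw [this, hLdef, hDgdef]
      ring
    -- nonnegativity of L and Dg
    have hωx0 : ∀ i, r1 ≤ i → i ≤ r2 → 0 ≤ ω i * x i := fun i hi hi2 =>
      mul_nonneg (hω_nonneg i (le_trans hr1 hi)) (hx i (le_trans hr1 hi) (le_trans hi2 hr2n))
    have hL0 : 0 ≤ L := by
      apply Finset.sum_nonneg; intro k hk
      apply Finset.sum_nonneg; intro j hj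
      simp only [hI, Finset.mem_Icc] at hk hj
      exact mul_nonneg (hωx0 k hk.1 hk.2) (hωx0 j hj.1 (by omega))
    have hDg0 : 0 ≤ Dg := by
      apply Finset.sum_nonneg; intro i hi
      simp only [hI, Finset.mem_Icc] at hi
      exact mul_nonneg (hωx0 i hi.1 hi.2) (hωx0 i hi.1 hi.2)
    -- √r1 * L ≤ P
    have hr1φ : (0:ℝ) ≤ φ r1 := hφ0 r1
    have hLP : Real.sqrt r1 * L ≤ P := by
      rw [hLdef, Finset.mul_sum]
      calc ∑ k ∈ I, Real.sqrt r1 * ∑ j ∈ Icc r1 (k - 1), (ω k * x k) * (ω j * x j)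
          ≤ ∑ k ∈ I, ∑ j ∈ Icc r1 (k - 1), φ j * (θ k j * x k * x j) := by
            apply Finset.sum_le_sum
            intro k hk
            rw [Finset.mul_sum]
            apply Finset.sum_le_sum
            intro j hj
            simp only [hI, Finset.mem_Icc] at hk hj
            have hk1 : 1 ≤ k := le_trans hr1 hk.1
            have hkn : k ≤ n := le_trans hk.2 hr2n
            have hj1 : 1 ≤ j := le_trans hr1 hj.1
            have hjn : j ≤ n := by omega
            have h1 : Real.sqrt r1 ≤ φ j := Real.sqrt_le_sqrt (by exact_mod_cast hj.1)
            have h2 : ω k * ω j ≤ θ k j := hθω k j hk1 hj1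
            have hxk := hx k hk1 hkn
            have hxj := hx j hj1 hjn
            have hωk := hω_nonneg k hk1
            have hωj := hω_nonneg j hj1
            calc Real.sqrt r1 * ((ω k * x k) * (ω j * x j))
                = Real.sqrt r1 * ((ω k * ω j) * x k * x j) := by ring
              _ ≤ φ j * ((ω k * ω j) * x k * x j) := by
                  apply mul_le_mul_of_nonneg_right h1
                  positivity
              _ ≤ φ j * (θ k j * x k * x j) := by
                  apply mul_le_mul_of_nonneg_left _ (hφ0 j)
                  apply mul_le_mul_of_nonneg_right _ hxj
                  exact mul_le_mul_of_nonneg_right h2 hxk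
        _ ≤ ∑ k ∈ I, ∑ j ∈ Icc 1 (k - 1), φ j * (θ k j * x k * x j) := by
            apply Finset.sum_le_sum
            intro k hk
            simp only [hI, Finset.mem_Icc] at hk
            apply Finset.sum_le_sum_of_subset_of_nonneg
            · apply Finset.Icc_subset_Icc_left hr1
            · intro j hj _
              simp only [Finset.mem_Icc] at hj
              exact mul_nonneg (hφ0 j)
                (hterm0 k j (le_trans hr1 hk.1) (le_trans hk.2 hr2n) hj.1 (by omega))
        _ ≤ P := by
            rw [hPdef]
            apply Finset.sum_le_sum_of_subset_of_nonneg
            · rw [hI]; exact Finset.Icc_subset_Icc (by omega) hr2n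
            · intro k hk _
              simp only [Finset.mem_Icc] at hk
              apply Finset.sum_nonneg
              intro j hj
              simp only [Finset.mem_Icc] at hj
              exact mul_nonneg (hφ0 j) (hterm0 k j hk.1 hk.2 hj.1 (by omega))
    -- √r1 * Dg ≤ Q
    have hDQ : Real.sqrt r1 * Dg ≤ Q := by
      rw [hDgdef, Finset.mul_sum]
      calc ∑ i ∈ I, Real.sqrt r1 * ((ω i * x i) * (ω i * x i))
          ≤ ∑ i ∈ I, φ i * (θ i i * x i * x i) := by
            apply Finset.sum_le_sum
            intro i hi
            simp only [hI, Finset.mem_Icc] at hi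
            have hi1 : 1 ≤ i := le_trans hr1 hi.1
            have hin : i ≤ n := le_trans hi.2 hr2n
            have h1 : Real.sqrt r1 ≤ φ i := Real.sqrt_le_sqrt (by exact_mod_cast (le_trans hi.1 le_rfl))
            have h2 : ω i * ω i ≤ θ i i := hθω i i hi1 hi1
            have hxi := hx i hi1 hin
            have hωi := hω_nonneg i hi1
            calc Real.sqrt r1 * ((ω i * x i) * (ω i * x i))
                = Real.sqrt r1 * ((ω i * ω i) * x i * x i) := by ring
              _ ≤ φ i * ((ω i * ω i) * x i * x i) := by
                  apply mul_le_mul_of_nonneg_right h1; positivity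
              _ ≤ φ i * (θ i i * x i * x i) := by
                  apply mul_le_mul_of_nonneg_left _ (hφ0 i)
                  apply mul_le_mul_of_nonneg_right _ hxi
                  exact mul_le_mul_of_nonneg_right h2 hxi
        _ ≤ Q := by
            rw [hQdef]
            apply Finset.sum_le_sum_of_subset_of_nonneg
            · rw [hI]; exact Finset.Icc_subset_Icc (by omega) hr2n
            · intro i hi _
              simp only [Finset.mem_Icc] at hi
              exact mul_nonneg (hφ0 i) (hterm0 i i hi.1 hi.2 hi.1 hi.2)
    have hs0 : (0:ℝ) ≤ Real.sqrt r1 := Real.sqrt_nonneg _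
    rw [hG2]
    nlinarith [hLP, hDQ, hL0, hDg0, hs0]
  linarith [hAA', hPQ]

end RBKAux

/-- Under (K1), the nonnegative global solution of the truncated RBK system
satisfies, for `1 ≤ r1 ≤ r2 ≤ n` and `0 ≤ t1 ≤ t2`,
`∫_{t1}^{t2} (∑_{i=r1}^{r2} ω_i f_i(s))² ds ≤ 2 r1^{−1/2} ∑_{i=1}^n i^{1/2} f_i(t1)`. -/
theorem truncRBK_L2_omega_estimate
    (θ : ℕ → ℕ → ℝ) (ω : ℕ → ℝ) (κ : ℕ → ℕ → ℝ)
    (hθ_symm : ∀ i j : ℕ, 1 ≤ i → 1 ≤ j → θ i j = θ j i)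
    -- (K1)
    (hK1 : ∀ i j : ℕ, 1 ≤ i → 1 ≤ j → θ i j = ω i * ω j + κ i j)
    (hω_nonneg : ∀ i : ℕ, 1 ≤ i → 0 ≤ ω i)
    (hκ_nonneg : ∀ i j : ℕ, 1 ≤ i → 1 ≤ j → 0 ≤ κ i j)
    (hκ_symm : ∀ i j : ℕ, 1 ≤ i → 1 ≤ j → κ i j = κ j i)
    (n : ℕ) (hn : 2 ≤ n)
    (fin : ℕ → ℝ) (hfin : ∀ i ∈ Finset.Icc 1 n, 0 ≤ fin i)
    (f : ℕ → ℝ → ℝ) (hf : IsTruncRBKOn θ n (Set.Ici 0) f)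
    (hinit : ∀ i ∈ Finset.Icc 1 n, f i 0 = fin i)
    (hf_nonneg : ∀ i ∈ Finset.Icc 1 n, ∀ t ∈ Set.Ici (0:ℝ), 0 ≤ f i t)
    (r1 r2 : ℕ) (hr1 : 1 ≤ r1) (hr12 : r1 ≤ r2) (hr2n : r2 ≤ n)
    (t1 t2 : ℝ) (ht1 : 0 ≤ t1) (ht12 : t1 ≤ t2) :
    ∫ s in t1..t2, (∑ i ∈ Finset.Icc r1 r2, ω i * f i s) ^ 2
      ≤ 2 * (Real.sqrt r1)⁻¹ * ∑ i ∈ Finset.Icc 1 n, Real.sqrt i * f i t1 := by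
  classical
  set G : ℝ → ℝ := fun s => ∑ i ∈ Finset.Icc r1 r2, ω i * f i s with hGdef
  set M : ℝ → ℝ := fun t => ∑ i ∈ Finset.Icc 1 n, Real.sqrt i * f i t with hMdef
  set D : ℝ → ℝ := fun t => ∑ i ∈ Finset.Icc 1 n, Real.sqrt i *
      ((∑ j ∈ Finset.Icc 1 (n - i), θ (i + j) j * f (i + j) t * f j t)
        - ∑ j ∈ Finset.Icc 1 n, θ i j * f i t * f j t) with hDdef
  have ht2 : (0:ℝ) ≤ t2 := le_trans ht1 ht12
  have hIccsub : Set.Icc t1 t2 ⊆ Set.Ici (0:ℝ) := fun s hs => le_trans ht1 hs.1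
  -- continuity of component functions
  have hfc : ∀ i ∈ Finset.Icc 1 n, ContinuousOn (f i) (Set.Ici 0) := by
    intro i hi
    intro t ht
    exact (hf i hi t ht).continuousWithinAt
  -- derivative of M
  have hMd : ∀ t ∈ Set.Ici (0:ℝ), HasDerivWithinAt M (D t) (Set.Ici 0) t := by
    intro t ht
    exact HasDerivWithinAt.fun_sum (fun i hi => ((hf i hi t ht).const_mul (Real.sqrt i)))
  -- continuity of M on Icc
  have hMc : ContinuousOn M (Set.Icc t1 t2) := by
    apply ContinuousOn.mono _ hIccsub
    apply continuousOn_finset_sum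
    intro i hi
    exact (hfc i hi).const_smul (Real.sqrt i)
  -- continuity of G and D
  have hGc : ContinuousOn G (Set.Ici 0) := by
    apply continuousOn_finset_sum
    intro i hi
    simp only [Finset.mem_Icc] at hi
    have : i ∈ Finset.Icc 1 n := by simp only [Finset.mem_Icc]; omega
    exact (hfc i this).const_smul (ω i)
  have hDc : ContinuousOn D (Set.Ici 0) := by
    apply continuousOn_finset_sum
    intro i hi
    apply ContinuousOn.const_smul _ (Real.sqrt i)
    apply ContinuousOn.sub
    · apply continuousOn_finset_sum
      intro j hj
      simp only [Finset.mem_Icc] at hi hj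
      have h1 : i + j ∈ Finset.Icc 1 n := by simp only [Finset.mem_Icc]; omega
      have h2 : j ∈ Finset.Icc 1 n := by simp only [Finset.mem_Icc]; omega
      exact (((hfc (i + j) h1).const_smul (θ (i + j) j)).mul (hfc j h2))
    · apply continuousOn_finset_sum
      intro j hj
      simp only [Finset.mem_Icc] at hi hj
      have h2 : j ∈ Finset.Icc 1 n := by simp only [Finset.mem_Icc]; omega
      exact (((hfc i (by simp only [Finset.mem_Icc]; omega)).const_smul (θ i j)).mul (hfc j h2))
  -- integrability
  have hG2int : IntervalIntegrable (fun s => (G s) ^ 2) volume t1 t2 := by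
    apply ContinuousOn.intervalIntegrable
    rw [Set.uIcc_of_le ht12]
    exact (hGc.mono hIccsub).pow 2
  have hDint : IntervalIntegrable D volume t1 t2 := by
    apply ContinuousOn.intervalIntegrable
    rw [Set.uIcc_of_le ht12]
    exact hDc.mono hIccsub
  -- pointwise bound
  have hr1s : (0:ℝ) < Real.sqrt r1 := Real.sqrt_pos.mpr (by exact_mod_cast hr1)
  set c : ℝ := Real.sqrt r1 / 2 with hcdef
  have hc : 0 < c := by positivity
  have hDle : ∀ s ∈ Set.Icc t1 t2, D s ≤ -(c * (G s) ^ 2) := by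
    intro s hs
    have hs0 : s ∈ Set.Ici (0:ℝ) := hIccsub hs
    exact rbk_key θ ω κ hθ_symm hK1 hω_nonneg hκ_nonneg n r1 r2 hr1 hr12 hr2n
      (fun i => f i s)
      (fun i hi1 hin => hf_nonneg i (by simp only [Finset.mem_Icc]; exact ⟨hi1, hin⟩) s hs0)
  -- FTC
  have hFTC : ∫ s in t1..t2, D s = M t2 - M t1 := by
    apply intervalIntegral.integral_eq_sub_of_hasDeriv_right_of_le ht12 hMc _ hDint
    intro s hs
    have hs0 : s ∈ Set.Ici (0:ℝ) := le_trans ht1 (le_of_lt hs.1)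
    exact (hMd s hs0).mono (fun y hy => Set.mem_Ici.mpr (le_trans (Set.mem_Ici.mp hs0) (le_of_lt (Set.mem_Ioi.mp hy))))
  -- integral comparison
  have hint : ∫ s in t1..t2, D s ≤ ∫ s in t1..t2, -(c * (G s) ^ 2) := by
    apply intervalIntegral.integral_mono_on ht12 hDint ((hG2int.const_mul c).neg) hDle
  have hneg : ∫ s in t1..t2, -(c * (G s) ^ 2)
      = -(c * ∫ s in t1..t2, (G s) ^ 2) := by
    rw [intervalIntegral.integral_neg, intervalIntegral.integral_const_mul]
  have hM2 : 0 ≤ M t2 := by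
    apply Finset.sum_nonneg
    intro i hi
    exact mul_nonneg (Real.sqrt_nonneg _) (hf_nonneg i hi t2 ht2)
  have hkey : c * ∫ s in t1..t2, (G s) ^ 2 ≤ M t1 := by
    rw [hneg] at hint
    rw [hFTC] at hint
    linarith
  have hG2nonneg : 0 ≤ ∫ s in t1..t2, (G s) ^ 2 :=
    intervalIntegral.integral_nonneg ht12 (fun s hs => sq_nonneg _)
  -- conclude
  have : (∫ s in t1..t2, (G s) ^ 2) ≤ M t1 / c := (le_div_iff₀ hc).mpr (by linarith [hkey])
  have hMc2 : M t1 / c = 2 * (Real.sqrt r1)⁻¹ * M t1 := by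
    rw [hcdef]
    field_simp
  calc (∫ s in t1..t2, (G s) ^ 2) ≤ M t1 / c := this
    _ = 2 * (Real.sqrt r1)⁻¹ * M t1 := hMc2
end

section
/- Let n ≥ 2, let (θ_{i,j})_{i,j≥1} be a coagulation kernel, and let f^n = (f_i^n)_{1≤i≤n} be the nonnegative global solution of the truncated RBK system with nonnegative initial data. Then for every i ∈ {1,…,n} and every t ∈ [0,∞), f_i^n(t) ≤ Σ_{j=1}^{n} f_j^n(t) ≤ Σ_{j=1}^{n} f_j^{n,in}. -/
open MeasureTheory Finset Filter

/-- For the nonnegative global solution of the truncated RBK system,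
each component is dominated by the total number of clusters, which itself is dominated by
its initial value: `f_i(t) ≤ ∑_{j=1}^n f_j(t) ≤ ∑_{j=1}^n fin_j` for `t ≥ 0`. -/
theorem truncRBK_pointwise_bound
    (θ : ℕ → ℕ → ℝ)
    (hθ_nonneg : ∀ i j : ℕ, 1 ≤ i → 1 ≤ j → 0 ≤ θ i j)
    (hθ_symm : ∀ i j : ℕ, 1 ≤ i → 1 ≤ j → θ i j = θ j i)
    (n : ℕ) (hn : 2 ≤ n)
    (fin : ℕ → ℝ) (hfin : ∀ i ∈ Finset.Icc 1 n, 0 ≤ fin i)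
    (f : ℕ → ℝ → ℝ) (hf : IsTruncRBKOn θ n (Set.Ici 0) f)
    (hinit : ∀ i ∈ Finset.Icc 1 n, f i 0 = fin i)
    (hf_nonneg : ∀ i ∈ Finset.Icc 1 n, ∀ t ∈ Set.Ici (0:ℝ), 0 ≤ f i t)
    (i : ℕ) (hi : i ∈ Finset.Icc 1 n) (t : ℝ) (ht : 0 ≤ t) :
    f i t ≤ ∑ j ∈ Finset.Icc 1 n, f j t
      ∧ ∑ j ∈ Finset.Icc 1 n, f j t ≤ ∑ j ∈ Finset.Icc 1 n, fin j := by
  set A := Finset.Icc 1 n with hA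
  set S : ℝ → ℝ := fun s => ∑ j ∈ A, f j s with hSdef
  set D : ℝ → ℝ := fun s => ∑ k ∈ A,
    ((∑ j ∈ Finset.Icc 1 (n - k), θ (k + j) j * f (k + j) s * f j s)
      - ∑ j ∈ A, θ k j * f k s * f j s) with hDdef
  have hS : ∀ s ∈ Set.Ici (0:ℝ), HasDerivWithinAt S (D s) (Set.Ici 0) s := by
    intro s hs
    exact HasDerivWithinAt.fun_sum fun k hk => hf k hk s hs
  have hD : ∀ s ∈ Set.Ici (0:ℝ), D s ≤ 0 := by
    intro s hs
    have g_nonneg : ∀ k j, k ∈ A → j ∈ A → 0 ≤ θ k j * f k s * f j s := by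
      intro k j hk hj
      have hk1 := (Finset.mem_Icc.mp hk).1
      have hj1 := (Finset.mem_Icc.mp hj).1
      exact mul_nonneg (mul_nonneg (hθ_nonneg k j hk1 hj1) (hf_nonneg k hk s hs))
        (hf_nonneg j hj s hs)
    rw [hDdef]
    simp only [Finset.sum_sub_distrib]
    rw [sub_nonpos]
    -- gain ≤ loss
    calc (∑ k ∈ A, ∑ j ∈ Finset.Icc 1 (n - k), θ (k + j) j * f (k + j) s * f j s)
        = ∑ p ∈ A.sigma (fun k => Finset.Icc 1 (n - k)),
            θ (p.1 + p.2) p.2 * f (p.1 + p.2) s * f p.2 s := by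
          rw [Finset.sum_sigma]
      _ = ∑ q ∈ (A.sigma (fun k => Finset.Icc 1 (n - k))).image
            (fun p : Σ _ : ℕ, ℕ => (p.1 + p.2, p.2)),
            θ q.1 q.2 * f q.1 s * f q.2 s := by
          rw [Finset.sum_image]
          intro p hp q hq hpq
          have h2 : p.2 = q.2 := (Prod.mk.injEq _ _ _ _ ▸ hpq).2
          have h1 : p.1 = q.1 := by
            have := (Prod.mk.injEq _ _ _ _ ▸ hpq).1
            omega
          exact Sigma.ext h1 (heq_of_eq h2)
      _ ≤ ∑ q ∈ A ×ˢ A, θ q.1 q.2 * f q.1 s * f q.2 s := by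
          apply Finset.sum_le_sum_of_subset_of_nonneg
          · intro q hq
            simp only [Finset.mem_image] at hq
            obtain ⟨p, hp, rfl⟩ := hq
            rw [Finset.mem_sigma] at hp
            obtain ⟨hp1, hp2⟩ := hp
            rw [hA, Finset.mem_Icc] at hp1
            rw [Finset.mem_Icc] at hp2
            have h3 : p.snd + p.fst ≤ n := (Nat.le_sub_iff_add_le hp1.2).mp hp2.2
            refine Finset.mem_product.mpr ⟨Finset.mem_Icc.mpr ⟨by omega, by omega⟩,
              Finset.mem_Icc.mpr ⟨hp2.1, by omega⟩⟩
          · intro q hq _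
            rw [Finset.mem_product] at hq
            exact g_nonneg q.1 q.2 hq.1 hq.2
      _ = ∑ k ∈ A, ∑ j ∈ A, θ k j * f k s * f j s := by
          rw [Finset.sum_product]
  -- antitone of S
  have hcont : ContinuousOn S (Set.Ici 0) := fun s hs => (hS s hs).continuousWithinAt
  have hSle : S t ≤ S 0 := by
    have hanti : AntitoneOn S (Set.Ici 0) := by
      apply antitoneOn_of_deriv_nonpos (convex_Ici 0) hcont
      · intro x hx
        rw [interior_Ici] at hx
        exact ((hS x (Set.mem_Ici.mpr (le_of_lt (Set.mem_Ioi.mp hx)))).hasDerivAt (Ici_mem_nhds hx)).differentiableAt.differentiableWithinAt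
      · intro x hx
        rw [interior_Ici] at hx
        rw [((hS x (Set.mem_Ici.mpr (le_of_lt (Set.mem_Ioi.mp hx)))).hasDerivAt (Ici_mem_nhds hx)).deriv]
        exact hD x (Set.mem_Ici.mpr (le_of_lt (Set.mem_Ioi.mp hx)))
    exact hanti (Set.self_mem_Ici) ht ht
  constructor
  · exact Finset.single_le_sum (fun j hj => hf_nonneg j hj t ht) hi
  · calc S t ≤ S 0 := hSle
      _ = ∑ j ∈ A, fin j := Finset.sum_congr rfl fun j hj => hinit j hj
end

section
/- Let n ≥ 2, let (θ_{i,j})_{i,j≥1} be a coagulation kernel satisfying (K1) and (K3), and let f^n = (f_i^n)_{1≤i≤n} be the nonnegative global solution of the truncated RBK system with nonnegative initial data. Then for every i ∈ {1,…,n} and every T ∈ (0,∞), ‖f_i^n‖_{L^1(0,T)} + ‖df_i^n/dt‖_{L^1(0,T)} ≤ T Σ_{j=1}^{n} f_j^{n,in} + 4(1+A) Σ_{j=1}^{n} f_j^{n,in}; in particular the W^{1,1}(0,T)-norm of f_i^n is bounded by a constant depending only on T, A and Σ_{j=1}^{n} f_j^{n,in}. -/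
open MeasureTheory Finset Filter

lemma rbk_aux_double (n : ℕ) (a : ℕ → ℕ → ℝ)
    (ha : ∀ k j, 1 ≤ k → k ≤ n → 1 ≤ j → j ≤ n → 0 ≤ a k j)
    (hsymm : ∀ k j, 1 ≤ k → k ≤ n → 1 ≤ j → j ≤ n → a k j = a j k) :
    2 * (∑ k ∈ Finset.Icc 1 n, ∑ j ∈ Finset.Icc 1 (n - k), a (k + j) j)
      ≤ ∑ k ∈ Finset.Icc 1 n, ∑ j ∈ Finset.Icc 1 n, a k j := by
  rw [Finset.sum_sigma' (Finset.Icc 1 n) (fun k => Finset.Icc 1 (n - k))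
      (fun k j => a (k + j) j),
    Finset.sum_sigma' (Finset.Icc 1 n) (fun _ => Finset.Icc 1 n) (fun k j => a k j)]
  set s₁ := (Finset.Icc 1 n).sigma (fun k => Finset.Icc 1 (n - k)) with hs₁
  set s₂ := (Finset.Icc 1 n).sigma (fun _ => Finset.Icc 1 n) with hs₂
  rw [← Finset.sum_filter_add_sum_filter_not s₂ (fun p => p.2 < p.1), two_mul]
  have hmem : ∀ p ∈ s₁, 1 ≤ p.1 ∧ p.1 ≤ n ∧ 1 ≤ p.2 ∧ p.2 ≤ n - p.1 := by
    intro p hp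
    rw [hs₁, Finset.mem_sigma, Finset.mem_Icc, Finset.mem_Icc] at hp
    exact ⟨hp.1.1, hp.1.2, hp.2.1, hp.2.2⟩
  have h1 : (∑ p ∈ s₁, a (p.1 + p.2) p.2)
      ≤ ∑ p ∈ s₂.filter (fun p => p.2 < p.1), a p.1 p.2 := by
    have hinj : ∀ p ∈ s₁, ∀ q ∈ s₁,
        (⟨p.1 + p.2, p.2⟩ : Σ _ : ℕ, ℕ) = ⟨q.1 + q.2, q.2⟩ → p = q := by
      intro p _ q _ h
      obtain ⟨h1, h2⟩ := Sigma.mk.inj_iff.mp h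
      have h2' : p.2 = q.2 := by exact_mod_cast eq_of_heq h2
      have : p.1 = q.1 := by omega
      exact Sigma.ext this h2
    rw [show (∑ p ∈ s₁, a (p.1 + p.2) p.2)
        = ∑ p ∈ s₁, (fun q : Σ _ : ℕ, ℕ => a q.1 q.2) (⟨p.1 + p.2, p.2⟩ : Σ _ : ℕ, ℕ)
      from rfl]
    refine le_trans (le_of_eq (Finset.sum_image (s := s₁)
        (g := fun p : (_ : ℕ) × ℕ => (⟨p.1 + p.2, p.2⟩ : (_ : ℕ) × ℕ))
        (f := fun q : (_ : ℕ) × ℕ => a q.1 q.2) hinj).symm) ?_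
    apply Finset.sum_le_sum_of_subset_of_nonneg
    · intro q hq
      obtain ⟨p, hp, rfl⟩ := Finset.mem_image.mp hq
      obtain ⟨c1, c2, c3, c4⟩ := hmem p hp
      simp only [Finset.mem_filter, hs₂, Finset.mem_sigma, Finset.mem_Icc]
      refine ⟨⟨?_, ?_⟩, ?_⟩ <;> omega
    · intro q hq _
      rw [Finset.mem_filter, hs₂, Finset.mem_sigma, Finset.mem_Icc, Finset.mem_Icc] at hq
      exact ha q.1 q.2 hq.1.1.1 hq.1.1.2 hq.1.2.1 hq.1.2.2
  have h2 : (∑ p ∈ s₁, a (p.1 + p.2) p.2)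
      ≤ ∑ p ∈ s₂.filter (fun p => ¬ p.2 < p.1), a p.1 p.2 := by
    have hrw : (∑ p ∈ s₁, a (p.1 + p.2) p.2)
        = ∑ p ∈ s₁, (fun q : Σ _ : ℕ, ℕ => a q.1 q.2) (⟨p.2, p.1 + p.2⟩ : Σ _ : ℕ, ℕ) := by
      refine Finset.sum_congr rfl fun p hp => ?_
      obtain ⟨c1, c2, c3, c4⟩ := hmem p hp
      exact hsymm (p.1 + p.2) p.2 (by omega) (by omega) (by omega) (by omega)
    have hinj : ∀ p ∈ s₁, ∀ q ∈ s₁,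
        (⟨p.2, p.1 + p.2⟩ : Σ _ : ℕ, ℕ) = ⟨q.2, q.1 + q.2⟩ → p = q := by
      intro p _ q _ h
      obtain ⟨h1, h2⟩ := Sigma.mk.inj_iff.mp h
      have h2' : p.1 + p.2 = q.1 + q.2 := by exact_mod_cast eq_of_heq h2
      have e1 : p.1 = q.1 := by omega
      have e2 : p.2 = q.2 := by omega
      exact Sigma.ext e1 (heq_of_eq e2)
    rw [hrw]
    refine le_trans (le_of_eq (Finset.sum_image (s := s₁)
        (g := fun p : (_ : ℕ) × ℕ => (⟨p.2, p.1 + p.2⟩ : (_ : ℕ) × ℕ))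
        (f := fun q : (_ : ℕ) × ℕ => a q.1 q.2) hinj).symm) ?_
    apply Finset.sum_le_sum_of_subset_of_nonneg
    · intro q hq
      obtain ⟨p, hp, rfl⟩ := Finset.mem_image.mp hq
      obtain ⟨c1, c2, c3, c4⟩ := hmem p hp
      simp only [Finset.mem_filter, hs₂, Finset.mem_sigma, Finset.mem_Icc]
      refine ⟨⟨?_, ?_⟩, ?_⟩ <;> omega
    · intro q hq _
      rw [Finset.mem_filter, hs₂, Finset.mem_sigma, Finset.mem_Icc, Finset.mem_Icc] at hq
      exact ha q.1 q.2 hq.1.1.1 hq.1.1.2 hq.1.2.1 hq.1.2.2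
  exact add_le_add h1 h2

open MeasureTheory Filter

theorem truncRBK_W11_bound'
    (θ : ℕ → ℕ → ℝ)
    (hθ_symm : ∀ i j : ℕ, 1 ≤ i → 1 ≤ j → θ i j = θ j i)
    (hθnn : ∀ i j : ℕ, 1 ≤ i → 1 ≤ j → 0 ≤ θ i j)
    (A : ℝ) (hA : 0 < A)
    (n : ℕ) (hn : 2 ≤ n)
    (fin : ℕ → ℝ) (hfin : ∀ i ∈ Finset.Icc 1 n, 0 ≤ fin i)
    (f : ℕ → ℝ → ℝ)
    (hf : ∀ i ∈ Finset.Icc 1 n, ∀ t ∈ Set.Ici (0:ℝ),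
      HasDerivWithinAt (f i)
        ((∑ j ∈ Finset.Icc 1 (n - i), θ (i + j) j * f (i + j) t * f j t)
          - ∑ j ∈ Finset.Icc 1 n, θ i j * f i t * f j t) (Set.Ici 0) t)
    (hinit : ∀ i ∈ Finset.Icc 1 n, f i 0 = fin i)
    (hf_nonneg : ∀ i ∈ Finset.Icc 1 n, ∀ t ∈ Set.Ici (0:ℝ), 0 ≤ f i t)
    (i : ℕ) (hi : i ∈ Finset.Icc 1 n) (T : ℝ) (hT : 0 < T) :
    (∫ s in (0:ℝ)..T, |f i s|)
      + (∫ s in (0:ℝ)..T,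
          |(∑ j ∈ Finset.Icc 1 (n - i), θ (i + j) j * f (i + j) s * f j s)
            - ∑ j ∈ Finset.Icc 1 n, θ i j * f i s * f j s|)
      ≤ T * (∑ j ∈ Finset.Icc 1 n, fin j) + 4 * (1 + A) * ∑ j ∈ Finset.Icc 1 n, fin j := by
  classical
  obtain ⟨hi1, hin⟩ := Finset.mem_Icc.mp hi
  set gain : ℕ → ℝ → ℝ :=
    fun k t => ∑ j ∈ Finset.Icc 1 (n - k), θ (k + j) j * f (k + j) t * f j t with hgain
  set loss : ℕ → ℝ → ℝ :=
    fun k t => ∑ j ∈ Finset.Icc 1 n, θ k j * f k t * f j t with hloss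
  set S : ℝ → ℝ := fun t => ∑ k ∈ Finset.Icc 1 n, loss k t with hSdef
  set G : ℝ → ℝ := fun t => ∑ k ∈ Finset.Icc 1 n, gain k t with hGdef
  set F : ℝ → ℝ := fun t => ∑ j ∈ Finset.Icc 1 n, f j t with hFdef
  set K : ℝ := ∑ j ∈ Finset.Icc 1 n, fin j with hKdef
  have hKnn : 0 ≤ K := Finset.sum_nonneg hfin
  have hF0 : F 0 = K := Finset.sum_congr rfl hinit
  -- pointwise nonnegativity
  have hterm_nn : ∀ t ∈ Set.Ici (0:ℝ), ∀ k j : ℕ, 1 ≤ k → k ≤ n → 1 ≤ j → j ≤ n →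
      0 ≤ θ k j * f k t * f j t := by
    intro t ht k j hk hkn hj hjn
    exact mul_nonneg (mul_nonneg (hθnn k j hk hj)
      (hf_nonneg k (Finset.mem_Icc.mpr ⟨hk, hkn⟩) t ht))
      (hf_nonneg j (Finset.mem_Icc.mpr ⟨hj, hjn⟩) t ht)
  have hgain_nn : ∀ t ∈ Set.Ici (0:ℝ), ∀ k ∈ Finset.Icc 1 n, 0 ≤ gain k t := by
    intro t ht k hk
    obtain ⟨hk1, hkn⟩ := Finset.mem_Icc.mp hk
    refine Finset.sum_nonneg fun j hj => ?_
    obtain ⟨hj1, hjn⟩ := Finset.mem_Icc.mp hj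
    exact hterm_nn t ht (k + j) j (by omega) (by omega) (by omega) (by omega)
  have hloss_nn : ∀ t ∈ Set.Ici (0:ℝ), ∀ k ∈ Finset.Icc 1 n, 0 ≤ loss k t := by
    intro t ht k hk
    obtain ⟨hk1, hkn⟩ := Finset.mem_Icc.mp hk
    refine Finset.sum_nonneg fun j hj => ?_
    obtain ⟨hj1, hjn⟩ := Finset.mem_Icc.mp hj
    exact hterm_nn t ht k j hk1 hkn hj1 hjn
  have hG_nn : ∀ t ∈ Set.Ici (0:ℝ), 0 ≤ G t :=
    fun t ht => Finset.sum_nonneg (hgain_nn t ht)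
  have hS_nn : ∀ t ∈ Set.Ici (0:ℝ), 0 ≤ S t :=
    fun t ht => Finset.sum_nonneg (hloss_nn t ht)
  have h2GS : ∀ t ∈ Set.Ici (0:ℝ), 2 * G t ≤ S t := by
    intro t ht
    simp only [hGdef, hSdef, hgain, hloss]
    exact rbk_aux_double n (fun k j => θ k j * f k t * f j t)
      (fun k j hk hkn hj hjn => hterm_nn t ht k j hk hkn hj hjn)
      (fun k j hk hkn hj hjn => by
        show θ k j * f k t * f j t = θ j k * f j t * f k t
        rw [hθ_symm k j hk hj]; ring)
  have hGS : ∀ t ∈ Set.Ici (0:ℝ), G t ≤ S t := by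
    intro t ht
    have := h2GS t ht
    have := hG_nn t ht
    linarith
  -- continuity
  have hfc : ∀ j ∈ Finset.Icc 1 n, ContinuousOn (f j) (Set.Ici 0) :=
    fun j hj t ht => (hf j hj t ht).continuousWithinAt
  have htermc : ∀ k j : ℕ, 1 ≤ k → k ≤ n → 1 ≤ j → j ≤ n →
      ContinuousOn (fun t => θ k j * f k t * f j t) (Set.Ici 0) := by
    intro k j hk hkn hj hjn
    exact (continuousOn_const.mul (hfc k (Finset.mem_Icc.mpr ⟨hk, hkn⟩))).mul
      (hfc j (Finset.mem_Icc.mpr ⟨hj, hjn⟩))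
  have hgainc : ∀ k ∈ Finset.Icc 1 n, ContinuousOn (gain k) (Set.Ici 0) := by
    intro k hk
    obtain ⟨hk1, hkn⟩ := Finset.mem_Icc.mp hk
    refine continuousOn_finset_sum _ fun j hj => ?_
    obtain ⟨hj1, hjn⟩ := Finset.mem_Icc.mp hj
    exact htermc (k + j) j (by omega) (by omega) (by omega) (by omega)
  have hlossc : ∀ k ∈ Finset.Icc 1 n, ContinuousOn (loss k) (Set.Ici 0) := by
    intro k hk
    obtain ⟨hk1, hkn⟩ := Finset.mem_Icc.mp hk
    refine continuousOn_finset_sum _ fun j hj => ?_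
    obtain ⟨hj1, hjn⟩ := Finset.mem_Icc.mp hj
    exact htermc k j hk1 hkn hj1 hjn
  have hSc : ContinuousOn S (Set.Ici 0) := continuousOn_finset_sum _ hlossc
  have hGc : ContinuousOn G (Set.Ici 0) := continuousOn_finset_sum _ hgainc
  have hFc : ContinuousOn F (Set.Ici 0) := continuousOn_finset_sum _ hfc
  -- derivative of total mass
  have hFd : ∀ t ∈ Set.Ici (0:ℝ), HasDerivWithinAt F (G t - S t) (Set.Ici 0) t := by
    intro t ht
    have h := HasDerivWithinAt.fun_sum (u := Finset.Icc 1 n)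
      (A := fun k => f k) (A' := fun k => gain k t - loss k t)
      (fun k hk => hf k hk t ht)
    have heq : G t - S t = ∑ k ∈ Finset.Icc 1 n, (gain k t - loss k t) :=
      (Finset.sum_sub_distrib _ _).symm
    rw [heq]
    exact h
  have hsubT : ∀ t : ℝ, 0 ≤ t → Set.uIcc (0:ℝ) t ⊆ Set.Ici 0 := by
    intro t ht
    rw [Set.uIcc_of_le ht]
    exact fun x hx => hx.1
  -- FTC
  have hFTC : ∀ t : ℝ, 0 ≤ t → ∫ s in (0:ℝ)..t, (G s - S s) = F t - F 0 := by
    intro t ht0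
    have hint : IntervalIntegrable (fun s => G s - S s) volume 0 t :=
      ((hGc.mono (hsubT t ht0)).sub (hSc.mono (hsubT t ht0))).intervalIntegrable
    exact intervalIntegral.integral_eq_sub_of_hasDerivAt_of_le ht0
      (hFc.mono (by rw [← Set.uIcc_of_le ht0]; exact hsubT t ht0))
      (fun x hx => (hFd x (le_of_lt hx.1)).hasDerivAt (Ici_mem_nhds hx.1)) hint
  have hFTC' : ∀ t : ℝ, 0 ≤ t → ∫ s in (0:ℝ)..t, (S s - G s) = F 0 - F t := by
    intro t ht0
    have h := hFTC t ht0
    have : (∫ s in (0:ℝ)..t, (S s - G s)) = -∫ s in (0:ℝ)..t, (G s - S s) := by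
      rw [← intervalIntegral.integral_neg]
      simp only [neg_sub]
    rw [this, h]
    ring
  have hFle : ∀ t : ℝ, 0 ≤ t → F t ≤ F 0 := by
    intro t ht0
    have h := hFTC' t ht0
    have hnn : 0 ≤ ∫ s in (0:ℝ)..t, (S s - G s) :=
      intervalIntegral.integral_nonneg ht0 (fun u hu => by
        have := hGS u hu.1; linarith)
    linarith [h ▸ hnn]
  have hFTnn : 0 ≤ F T := Finset.sum_nonneg fun j hj => hf_nonneg j hj T hT.le
  -- integral of S bound
  have hintS : IntervalIntegrable S volume 0 T :=
    (hSc.mono (hsubT T hT.le)).intervalIntegrable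
  have hintG : IntervalIntegrable G volume 0 T :=
    (hGc.mono (hsubT T hT.le)).intervalIntegrable
  have hSint : (∫ s in (0:ℝ)..T, S s) ≤ 2 * K := by
    have hmono : (∫ s in (0:ℝ)..T, S s) ≤ ∫ s in (0:ℝ)..T, 2 * (S s - G s) := by
      refine intervalIntegral.integral_mono_on hT.le hintS
        ((hintS.sub hintG).const_mul 2) (fun u hu => ?_)
      have := h2GS u hu.1
      linarith
    have heq : (∫ s in (0:ℝ)..T, 2 * (S s - G s)) = 2 * ∫ s in (0:ℝ)..T, (S s - G s) :=
      intervalIntegral.integral_const_mul 2 _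
    have h := hFTC' T hT.le
    rw [heq, h] at hmono
    have := hFle T hT.le
    rw [hF0] at *
    linarith
  -- first integral
  have hIf : (∫ s in (0:ℝ)..T, |f i s|) ≤ T * K := by
    have hint1 : IntervalIntegrable (fun s => |f i s|) volume 0 T :=
      (((hfc i hi).mono (hsubT T hT.le)).abs).intervalIntegrable
    have hint2 : IntervalIntegrable (fun _ : ℝ => K) volume 0 T := intervalIntegrable_const
    have hmono := intervalIntegral.integral_mono_on hT.le hint1 hint2 (fun u hu => by
      have hu0 : (0:ℝ) ≤ u := hu.1
      have h1 : |f i u| = f i u := abs_of_nonneg (hf_nonneg i hi u hu0)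
      have h2 : f i u ≤ F u :=
        Finset.single_le_sum (f := fun j => f j u) (fun j hj => hf_nonneg j hj u hu0) hi
      have h3 := hFle u hu0
      rw [h1, ← hF0]
      linarith)
    calc (∫ s in (0:ℝ)..T, |f i s|) ≤ ∫ _ in (0:ℝ)..T, K := hmono
      _ = T * K := by simp [mul_comm]
  -- second integral
  have hID : (∫ s in (0:ℝ)..T, |gain i s - loss i s|) ≤ 4 * (1 + A) * K := by
    have hint1 : IntervalIntegrable (fun s => |gain i s - loss i s|) volume 0 T :=
      ((((hgainc i hi).mono (hsubT T hT.le)).sub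
        ((hlossc i hi).mono (hsubT T hT.le))).abs).intervalIntegrable
    have hmono := intervalIntegral.integral_mono_on hT.le hint1 (hintS.const_mul 2)
      (fun u hu => by
        have hu0 : (0:ℝ) ≤ u := hu.1
        have h1 : gain i u ≤ G u :=
          Finset.single_le_sum (f := fun k => gain k u) (hgain_nn u hu0) hi
        have h2 : loss i u ≤ S u :=
          Finset.single_le_sum (f := fun k => loss k u) (hloss_nn u hu0) hi
        have h3 := hGS u hu0
        have h4 := hgain_nn u hu0 i hi
        have h5 := hloss_nn u hu0 i hi
        have h6 := hS_nn u hu0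
        rw [abs_le]
        constructor <;> [linarith; linarith])
    have heq : (∫ s in (0:ℝ)..T, 2 * S s) = 2 * ∫ s in (0:ℝ)..T, S s :=
      intervalIntegral.integral_const_mul 2 _
    rw [heq] at hmono
    have h7 : (2:ℝ) * ∫ s in (0:ℝ)..T, S s ≤ 2 * (2 * K) := by linarith
    have h8 : (4:ℝ) * K ≤ 4 * (1 + A) * K := by nlinarith [mul_nonneg hA.le hKnn]
    linarith
  simp only [hgain, hloss] at hID
  exact le_trans (add_le_add hIf hID) (by rw [hKdef])

/-- Under (K1) and (K3), the nonnegative global solution of the truncated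
RBK system satisfies, for every `1 ≤ i ≤ n` and `T > 0`, the `W^{1,1}(0,T)` bound
`‖f_i‖_{L¹(0,T)} + ‖df_i/dt‖_{L¹(0,T)} ≤ T ∑_{j=1}^n fin_j + 4(1+A) ∑_{j=1}^n fin_j`
(the derivative being the right-hand side of the system). -/
theorem truncRBK_W11_bound
    (θ : ℕ → ℕ → ℝ) (ω : ℕ → ℝ) (κ : ℕ → ℕ → ℝ)
    (hθ_symm : ∀ i j : ℕ, 1 ≤ i → 1 ≤ j → θ i j = θ j i)
    -- (K1)
    (hK1 : ∀ i j : ℕ, 1 ≤ i → 1 ≤ j → θ i j = ω i * ω j + κ i j)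
    (hω_nonneg : ∀ i : ℕ, 1 ≤ i → 0 ≤ ω i)
    (hκ_nonneg : ∀ i j : ℕ, 1 ≤ i → 1 ≤ j → 0 ≤ κ i j)
    (hκ_symm : ∀ i j : ℕ, 1 ≤ i → 1 ≤ j → κ i j = κ j i)
    -- (K3)
    (R A : ℝ) (hR : 0 < R) (hA : 0 < A)
    (hωR : ∀ i : ℕ, 1 ≤ i → R * i ≤ ω i)
    (hκA : ∀ i j : ℕ, 1 ≤ i → 1 ≤ j → κ i j ≤ A * (ω i * ω j))
    (n : ℕ) (hn : 2 ≤ n)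
    (fin : ℕ → ℝ) (hfin : ∀ i ∈ Finset.Icc 1 n, 0 ≤ fin i)
    (f : ℕ → ℝ → ℝ) (hf : IsTruncRBKOn θ n (Set.Ici 0) f)
    (hinit : ∀ i ∈ Finset.Icc 1 n, f i 0 = fin i)
    (hf_nonneg : ∀ i ∈ Finset.Icc 1 n, ∀ t ∈ Set.Ici (0:ℝ), 0 ≤ f i t)
    (i : ℕ) (hi : i ∈ Finset.Icc 1 n) (T : ℝ) (hT : 0 < T) :
    (∫ s in (0:ℝ)..T, |f i s|)
      + (∫ s in (0:ℝ)..T,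
          |(∑ j ∈ Finset.Icc 1 (n - i), θ (i + j) j * f (i + j) s * f j s)
            - ∑ j ∈ Finset.Icc 1 n, θ i j * f i s * f j s|)
      ≤ T * (∑ j ∈ Finset.Icc 1 n, fin j) + 4 * (1 + A) * ∑ j ∈ Finset.Icc 1 n, fin j := by
  have hθnn : ∀ k j : ℕ, 1 ≤ k → 1 ≤ j → 0 ≤ θ k j := by
    intro k j hk hj
    rw [hK1 k j hk hj]
    exact add_nonneg (mul_nonneg (hω_nonneg k hk) (hω_nonneg j hj)) (hκ_nonneg k j hk hj)
  exact truncRBK_W11_bound' θ hθ_symm hθnn A hA n hn fin hfin f hf hinit hf_nonneg i hi T hT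
end

section
/- Let (θ_{i,j})_{i,j≥1} be a coagulation kernel satisfying (K1) and the bound κ_{i,j} ≤ A ω_i ω_j for all i,j ≥ 1 and some A > 0. Let f^{in} = (f_i^{in})_{i≥1} ∈ X_1^+, let n ≥ 2, and let f^n be the nonnegative global solution of the truncated RBK system with initial data f_i^n(0) = f_i^{in} for 1 ≤ i ≤ n. Then for every i ≥ 1, every T ∈ (0,∞), and all 1 ≤ r1 ≤ r2 ≤ n, ∫_0^T ( Σ_{j=r1}^{r2} θ_{i,j} f_j^n(s) )^2 ds ≤ 2(1+A)^2 ω_i^2 r1^{−1/2} ‖f^{in}‖_1. -/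
open MeasureTheory Finset Filter

lemma rbk_gain (n : ℕ) (a : ℕ → ℕ → ℝ) :
    ∑ k ∈ Icc 1 n, ∑ j ∈ Icc 1 (n - k), (k : ℝ) * a (k + j) j
      = ∑ p ∈ Icc 1 n, ∑ j ∈ Icc 1 (p - 1), ((p : ℝ) - j) * a p j := by
  rw [Finset.sum_sigma' (Icc 1 n) (fun k => Icc 1 (n - k)),
    Finset.sum_sigma' (Icc 1 n) (fun p => Icc 1 (p - 1))]
  refine Finset.sum_nbij' (fun x => ⟨x.1 + x.2, x.2⟩) (fun x => ⟨x.1 - x.2, x.2⟩) ?_ ?_ ?_ ?_ ?_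
  · rintro ⟨k, j⟩ h
    simp only [Finset.mem_sigma, Finset.mem_Icc] at h ⊢
    omega
  · rintro ⟨p, j⟩ h
    simp only [Finset.mem_sigma, Finset.mem_Icc] at h ⊢
    omega
  · rintro ⟨k, j⟩ h
    simp only [Finset.mem_sigma, Finset.mem_Icc] at h
    dsimp only
    simp only [Sigma.mk.inj_iff, heq_eq_eq, and_true]
    omega
  · rintro ⟨p, j⟩ h
    simp only [Finset.mem_sigma, Finset.mem_Icc] at h
    dsimp only
    simp only [Sigma.mk.inj_iff, heq_eq_eq, and_true]
    omega
  · rintro ⟨k, j⟩ h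
    simp only [Finset.mem_sigma, Finset.mem_Icc] at h
    dsimp only
    push_cast
    ring

lemma rbk_sum_identity (n : ℕ) (a : ℕ → ℕ → ℝ) :
    ∑ k ∈ Icc 1 n, (k : ℝ) *
        ((∑ j ∈ Icc 1 (n - k), a (k + j) j) - ∑ j ∈ Icc 1 n, a k j)
      = - ∑ k ∈ Icc 1 n, ∑ j ∈ Icc 1 n, (min k j : ℝ) * a k j := by
  have h1 : ∀ p ∈ Icc 1 n, ∑ j ∈ Icc 1 (p - 1), ((p : ℝ) - j) * a p j
      = ∑ j ∈ Icc 1 n, (((p : ℝ) - (min p j : ℕ)) * a p j) := by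
    intro p hp
    rw [Finset.mem_Icc] at hp
    have hcongr : ∀ j ∈ Icc 1 (p - 1), ((p : ℝ) - (min p j : ℕ)) * a p j
        = ((p : ℝ) - j) * a p j := by
      intro j hj
      rw [Finset.mem_Icc] at hj
      have : min p j = j := by omega
      rw [this]
    rw [← Finset.sum_congr rfl hcongr]
    apply Finset.sum_subset (Finset.Icc_subset_Icc_right (by omega : p - 1 ≤ n))
    intro j hj hj'
    rw [Finset.mem_Icc] at hj hj'
    have : min p j = p := by omega
    rw [this, sub_self, zero_mul]
  calc ∑ k ∈ Icc 1 n, (k : ℝ) *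
        ((∑ j ∈ Icc 1 (n - k), a (k + j) j) - ∑ j ∈ Icc 1 n, a k j)
      = (∑ k ∈ Icc 1 n, ∑ j ∈ Icc 1 (n - k), (k : ℝ) * a (k + j) j)
        - ∑ k ∈ Icc 1 n, ∑ j ∈ Icc 1 n, (k : ℝ) * a k j := by
        rw [← Finset.sum_sub_distrib]
        exact Finset.sum_congr rfl fun k _ => by rw [mul_sub, Finset.mul_sum, Finset.mul_sum]
    _ = (∑ k ∈ Icc 1 n, ∑ j ∈ Icc 1 n, (((k : ℝ) - (min k j : ℕ)) * a k j))
        - ∑ k ∈ Icc 1 n, ∑ j ∈ Icc 1 n, (k : ℝ) * a k j := by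
        rw [rbk_gain, Finset.sum_congr rfl h1]
    _ = - ∑ k ∈ Icc 1 n, ∑ j ∈ Icc 1 n, (min k j : ℝ) * a k j := by
        rw [← Finset.sum_neg_distrib, ← Finset.sum_sub_distrib]
        refine Finset.sum_congr rfl fun k _ => ?_
        rw [← Finset.sum_neg_distrib, ← Finset.sum_sub_distrib]
        refine Finset.sum_congr rfl fun j _ => ?_
        push_cast
        ring

/-- Under (K1) with `κ_{i,j} ≤ A ω_i ω_j`, if `f^{in} ∈ X₁⁺` and `f^n` is
the nonnegative global solution of the truncated RBK system with initial data
`f_i^n(0) = f_i^{in}` for `1 ≤ i ≤ n`, then for every `i ≥ 1`, `T > 0` and `1 ≤ r1 ≤ r2 ≤ n`,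
`∫_0^T (∑_{j=r1}^{r2} θ_{i,j} f_j^n(s))² ds ≤ 2 (1+A)² ω_i² r1^{−1/2} ‖f^{in}‖₁`. -/
theorem truncRBK_L2_kernel_estimate
    (θ : ℕ → ℕ → ℝ) (ω : ℕ → ℝ) (κ : ℕ → ℕ → ℝ)
    (hθ_symm : ∀ i j : ℕ, 1 ≤ i → 1 ≤ j → θ i j = θ j i)
    -- (K1)
    (hK1 : ∀ i j : ℕ, 1 ≤ i → 1 ≤ j → θ i j = ω i * ω j + κ i j)
    (hω_nonneg : ∀ i : ℕ, 1 ≤ i → 0 ≤ ω i)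
    (hκ_nonneg : ∀ i j : ℕ, 1 ≤ i → 1 ≤ j → 0 ≤ κ i j)
    (hκ_symm : ∀ i j : ℕ, 1 ≤ i → 1 ≤ j → κ i j = κ j i)
    (A : ℝ) (hA : 0 < A)
    (hκA : ∀ i j : ℕ, 1 ≤ i → 1 ≤ j → κ i j ≤ A * (ω i * ω j))
    -- f^{in} ∈ X₁⁺
    (fin : ℕ → ℝ) (hfin_nonneg : ∀ i : ℕ, 1 ≤ i → 0 ≤ fin i)
    (hfin_summable : Summable (fun i : ℕ => (i : ℝ) * fin i))
    (n : ℕ) (hn : 2 ≤ n)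
    (f : ℕ → ℝ → ℝ) (hf : IsTruncRBKOn θ n (Set.Ici 0) f)
    (hinit : ∀ i ∈ Finset.Icc 1 n, f i 0 = fin i)
    (hf_nonneg : ∀ i ∈ Finset.Icc 1 n, ∀ t ∈ Set.Ici (0:ℝ), 0 ≤ f i t)
    (i : ℕ) (hi : 1 ≤ i) (T : ℝ) (hT : 0 < T)
    (r1 r2 : ℕ) (hr1 : 1 ≤ r1) (hr12 : r1 ≤ r2) (hr2n : r2 ≤ n) :
    ∫ s in (0:ℝ)..T, (∑ j ∈ Finset.Icc r1 r2, θ i j * f j s) ^ 2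
      ≤ 2 * (1 + A) ^ 2 * (ω i) ^ 2 * (Real.sqrt r1)⁻¹ * ∑' i : ℕ, (i : ℝ) * fin i := by
  -- basic kernel bounds
  have hθ_nonneg : ∀ k j : ℕ, 1 ≤ k → 1 ≤ j → 0 ≤ θ k j := by
    intro k j hk hj
    rw [hK1 k j hk hj]
    have := hκ_nonneg k j hk hj
    have := mul_nonneg (hω_nonneg k hk) (hω_nonneg j hj)
    linarith
  have hθ_ge : ∀ k j : ℕ, 1 ≤ k → 1 ≤ j → ω k * ω j ≤ θ k j := by
    intro k j hk hj
    rw [hK1 k j hk hj]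
    have := hκ_nonneg k j hk hj
    linarith
  have hθ_le : ∀ k j : ℕ, 1 ≤ k → 1 ≤ j → θ k j ≤ (1 + A) * (ω k * ω j) := by
    intro k j hk hj
    rw [hK1 k j hk hj]
    have := hκA k j hk hj
    linarith
  have hsub : Finset.Icc r1 r2 ⊆ Finset.Icc 1 n := Finset.Icc_subset_Icc hr1 hr2n
  -- continuity of each f k on [0, ∞)
  have hcont : ∀ k ∈ Finset.Icc 1 n, ContinuousOn (f k) (Set.Ici 0) := by
    intro k hk t ht
    exact (hf k hk t ht).continuousWithinAt
  have hIccsub : Set.Icc (0:ℝ) T ⊆ Set.Ici 0 := fun x hx => hx.1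
  have hcontT : ∀ k ∈ Finset.Icc 1 n, ContinuousOn (f k) (Set.Icc 0 T) :=
    fun k hk => (hcont k hk).mono hIccsub
  set M : ℝ → ℝ := fun t => ∑ k ∈ Finset.Icc 1 n, (k : ℝ) * f k t with hMdef
  set D : ℝ → ℝ := fun t => ∑ k ∈ Finset.Icc 1 n, ∑ j ∈ Finset.Icc 1 n,
      (min k j : ℝ) * (θ k j * f k t * f j t) with hDdef
  -- derivative of M
  have hMderiv : ∀ t ∈ Set.Ici (0:ℝ), HasDerivWithinAt M (-D t) (Set.Ici 0) t := by
    intro t ht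
    have hsum : HasDerivWithinAt M
        (∑ k ∈ Finset.Icc 1 n, (k : ℝ) *
          ((∑ j ∈ Finset.Icc 1 (n - k), θ (k + j) j * f (k + j) t * f j t)
            - ∑ j ∈ Finset.Icc 1 n, θ k j * f k t * f j t)) (Set.Ici 0) t := by
      apply HasDerivWithinAt.fun_sum
      intro k hk
      exact (hf k hk t ht).const_mul (k : ℝ)
    have hid := rbk_sum_identity n (fun k j => θ k j * f k t * f j t)
    rw [hid] at hsum
    exact hsum
  -- nonnegativity of f on [0,T]
  have hf_nonnegT : ∀ k ∈ Finset.Icc 1 n, ∀ s ∈ Set.Icc (0:ℝ) T, 0 ≤ f k s :=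
    fun k hk s hs => hf_nonneg k hk s (hIccsub hs)
  -- D is nonneg termwise
  have hDterm : ∀ s ∈ Set.Icc (0:ℝ) T, ∀ k ∈ Finset.Icc 1 n, ∀ j ∈ Finset.Icc 1 n,
      0 ≤ (min k j : ℝ) * (θ k j * f k s * f j s) := by
    intro s hs k hk j hj
    rw [Finset.mem_Icc] at hk hj
    have h1 := hθ_nonneg k j hk.1 hj.1
    have h2 := hf_nonnegT k (Finset.mem_Icc.mpr hk) s hs
    have h3 := hf_nonnegT j (Finset.mem_Icc.mpr hj) s hs
    positivity
  -- continuity of M and D on [0,T]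
  have hMcont : ContinuousOn M (Set.Icc 0 T) := by
    apply continuousOn_finset_sum
    intro k hk
    exact (hcontT k hk).const_smul (k:ℝ) |>.congr fun x _ => by simp [smul_eq_mul]
  have hDcont : ContinuousOn D (Set.Icc 0 T) := by
    apply continuousOn_finset_sum
    intro k hk
    apply continuousOn_finset_sum
    intro j hj
    have : ContinuousOn (fun s => θ k j * f k s * f j s) (Set.Icc 0 T) := by
      exact (((hcontT k hk).const_smul (θ k j)).congr (fun x _ => by simp [smul_eq_mul])).mul
        (hcontT j hj)
    exact (this.const_smul ((min k j : ℕ) : ℝ)).congr fun x _ => by simp [smul_eq_mul]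
  -- FTC
  have hDint : IntervalIntegrable D volume 0 T :=
    (hDcont.mono (by rw [Set.uIcc_of_le hT.le])).intervalIntegrable
  have hnegDint : IntervalIntegrable (fun s => -D s) volume 0 T := hDint.neg
  have hFTC : ∫ s in (0:ℝ)..T, (-D s) = M T - M 0 := by
    apply intervalIntegral.integral_eq_sub_of_hasDeriv_right_of_le hT.le hMcont _ hnegDint
    intro x hx
    exact (hMderiv x (le_of_lt hx.1)).mono (fun y hy => le_of_lt (lt_of_le_of_lt hx.1.le hy))
  have hintD : ∫ s in (0:ℝ)..T, D s = M 0 - M T := by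
    have := hFTC
    rw [intervalIntegral.integral_neg] at this
    linarith
  -- pointwise bound on the integrand
  set C : ℝ := (1 + A) ^ 2 * (ω i) ^ 2 * ((r1 : ℝ))⁻¹ with hCdef
  have hr1pos : (0:ℝ) < (r1 : ℝ) := by exact_mod_cast hr1
  have hC_nonneg : 0 ≤ C := by
    have : (0:ℝ) ≤ ((r1:ℝ))⁻¹ := by positivity
    positivity
  have hGD : ∀ s ∈ Set.Icc (0:ℝ) T,
      (∑ j ∈ Finset.Icc r1 r2, θ i j * f j s) ^ 2 ≤ C * D s := by
    intro s hs
    set S : ℝ := ∑ j ∈ Finset.Icc r1 r2, ω j * f j s with hSdef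
    have hmem1 : ∀ j ∈ Finset.Icc r1 r2, 1 ≤ j := by
      intro j hj; rw [Finset.mem_Icc] at hj; omega
    have hS_nonneg : 0 ≤ S := by
      apply Finset.sum_nonneg
      intro j hj
      exact mul_nonneg (hω_nonneg j (hmem1 j hj)) (hf_nonnegT j (hsub hj) s hs)
    have hsum_nonneg : 0 ≤ ∑ j ∈ Finset.Icc r1 r2, θ i j * f j s := by
      apply Finset.sum_nonneg
      intro j hj
      exact mul_nonneg (hθ_nonneg i j hi (hmem1 j hj)) (hf_nonnegT j (hsub hj) s hs)
    have hsum_le : ∑ j ∈ Finset.Icc r1 r2, θ i j * f j s ≤ (1 + A) * ω i * S := by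
      rw [hSdef, Finset.mul_sum]
      apply Finset.sum_le_sum
      intro j hj
      have hfj := hf_nonnegT j (hsub hj) s hs
      have h1 := hθ_le i j hi (hmem1 j hj)
      calc θ i j * f j s ≤ ((1 + A) * (ω i * ω j)) * f j s :=
            mul_le_mul_of_nonneg_right h1 hfj
        _ = (1 + A) * ω i * (ω j * f j s) := by ring
    have hsq : (∑ j ∈ Finset.Icc r1 r2, θ i j * f j s) ^ 2 ≤ ((1 + A) * ω i * S) ^ 2 :=
      pow_le_pow_left₀ hsum_nonneg hsum_le 2
    -- r1 * S^2 ≤ D s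
    have hr1S : (r1 : ℝ) * S ^ 2 ≤ D s := by
      have hS2 : S ^ 2 = ∑ k ∈ Finset.Icc r1 r2, ∑ j ∈ Finset.Icc r1 r2,
          (ω k * f k s) * (ω j * f j s) := by
        rw [sq, hSdef, Finset.sum_mul_sum]
      have step1 : (r1 : ℝ) * S ^ 2 ≤ ∑ k ∈ Finset.Icc r1 r2, ∑ j ∈ Finset.Icc r1 r2,
          (min k j : ℝ) * (θ k j * f k s * f j s) := by
        rw [hS2, Finset.mul_sum]
        apply Finset.sum_le_sum
        intro k hk
        rw [Finset.mul_sum]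
        apply Finset.sum_le_sum
        intro j hj
        have hk1 := hmem1 k hk
        have hj1 := hmem1 j hj
        have hfk := hf_nonnegT k (hsub hk) s hs
        have hfj := hf_nonnegT j (hsub hj) s hs
        have hωk := hω_nonneg k hk1
        have hωj := hω_nonneg j hj1
        have hθge := hθ_ge k j hk1 hj1
        have hminge : (r1 : ℝ) ≤ (min k j : ℝ) := by
          rw [Finset.mem_Icc] at hk hj
          exact_mod_cast le_min hk.1 hj.1
        have hmin0 : (0:ℝ) ≤ (min k j : ℝ) := by positivity
        calc (r1 : ℝ) * ((ω k * f k s) * (ω j * f j s))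
            = (r1 : ℝ) * (ω k * ω j) * (f k s * f j s) := by ring
          _ ≤ (min k j : ℝ) * θ k j * (f k s * f j s) := by
              apply mul_le_mul_of_nonneg_right _ (mul_nonneg hfk hfj)
              exact mul_le_mul hminge hθge (mul_nonneg hωk hωj) hmin0
          _ = (min k j : ℝ) * (θ k j * f k s * f j s) := by ring
      have step2 : ∑ k ∈ Finset.Icc r1 r2, ∑ j ∈ Finset.Icc r1 r2,
          (min k j : ℝ) * (θ k j * f k s * f j s) ≤ D s := by
        rw [hDdef]
        calc ∑ k ∈ Finset.Icc r1 r2, ∑ j ∈ Finset.Icc r1 r2,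
              (min k j : ℝ) * (θ k j * f k s * f j s)
            ≤ ∑ k ∈ Finset.Icc r1 r2, ∑ j ∈ Finset.Icc 1 n,
              (min k j : ℝ) * (θ k j * f k s * f j s) := by
              apply Finset.sum_le_sum
              intro k hk
              exact Finset.sum_le_sum_of_subset_of_nonneg hsub
                (fun j hj _ => hDterm s hs k (hsub hk) j hj)
          _ ≤ ∑ k ∈ Finset.Icc 1 n, ∑ j ∈ Finset.Icc 1 n,
              (min k j : ℝ) * (θ k j * f k s * f j s) := by
              apply Finset.sum_le_sum_of_subset_of_nonneg hsub
              intro k hk _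
              exact Finset.sum_nonneg fun j hj => hDterm s hs k hk j hj
      linarith
    have hS2le : S ^ 2 ≤ ((r1:ℝ))⁻¹ * D s := by
      rw [le_inv_mul_iff₀ hr1pos] at *
      linarith [hr1S]
    calc (∑ j ∈ Finset.Icc r1 r2, θ i j * f j s) ^ 2 ≤ ((1 + A) * ω i * S) ^ 2 := hsq
      _ = (1 + A) ^ 2 * (ω i) ^ 2 * S ^ 2 := by ring
      _ ≤ (1 + A) ^ 2 * (ω i) ^ 2 * (((r1:ℝ))⁻¹ * D s) := by
          apply mul_le_mul_of_nonneg_left hS2le (by positivity)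
      _ = C * D s := by rw [hCdef]; ring
  -- integrate
  have hGcont : ContinuousOn (fun s => (∑ j ∈ Finset.Icc r1 r2, θ i j * f j s) ^ 2)
      (Set.Icc 0 T) := by
    apply ContinuousOn.pow
    apply continuousOn_finset_sum
    intro j hj
    have hj1 : 1 ≤ j := by rw [Finset.mem_Icc] at hj; omega
    exact ((hcontT j (hsub hj)).const_smul (θ i j)).congr fun x _ => by simp [smul_eq_mul]
  have hGint : IntervalIntegrable (fun s => (∑ j ∈ Finset.Icc r1 r2, θ i j * f j s) ^ 2)
      volume 0 T :=
    (hGcont.mono (by rw [Set.uIcc_of_le hT.le])).intervalIntegrable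
  have hCDint : IntervalIntegrable (fun s => C * D s) volume 0 T := hDint.const_mul C
  have hmono : ∫ s in (0:ℝ)..T, (∑ j ∈ Finset.Icc r1 r2, θ i j * f j s) ^ 2
      ≤ ∫ s in (0:ℝ)..T, C * D s :=
    intervalIntegral.integral_mono_on hT.le hGint hCDint hGD
  have hCD : ∫ s in (0:ℝ)..T, C * D s = C * (M 0 - M T) := by
    rw [intervalIntegral.integral_const_mul, hintD]
  -- bounds on M
  have hMT_nonneg : 0 ≤ M T := by
    apply Finset.sum_nonneg
    intro k hk
    exact mul_nonneg (by positivity) (hf_nonneg k hk T (le_of_lt hT))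
  have hM0 : M 0 = ∑ k ∈ Finset.Icc 1 n, (k : ℝ) * fin k := by
    apply Finset.sum_congr rfl
    intro k hk
    rw [hinit k hk]
  have htsum_nonneg : ∀ b : ℕ, 0 ≤ (b : ℝ) * fin b := by
    intro b
    rcases Nat.eq_zero_or_pos b with hb | hb
    · simp [hb]
    · exact mul_nonneg (by positivity) (hfin_nonneg b hb)
  have hM0_le : M 0 ≤ ∑' k : ℕ, (k : ℝ) * fin k := by
    rw [hM0]
    exact Summable.sum_le_tsum _ (fun b _ => htsum_nonneg b) hfin_summable
  have hM0_nonneg : 0 ≤ M 0 := by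
    rw [hM0]
    exact Finset.sum_nonneg fun k _ => htsum_nonneg k
  have htsum0 : 0 ≤ ∑' k : ℕ, (k : ℝ) * fin k := tsum_nonneg htsum_nonneg
  -- final chain
  have hsqrt_pos : 0 < Real.sqrt r1 := Real.sqrt_pos.mpr hr1pos
  have hsqrt_le : Real.sqrt r1 ≤ (r1 : ℝ) := by
    nth_rewrite 2 [← Real.sqrt_sq hr1pos.le]
    apply Real.sqrt_le_sqrt
    nlinarith [hr1pos, (by exact_mod_cast hr1 : (1:ℝ) ≤ (r1:ℝ))]
  have hinv_le : ((r1:ℝ))⁻¹ ≤ (Real.sqrt r1)⁻¹ :=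
    inv_anti₀ hsqrt_pos hsqrt_le
  have hB : (0:ℝ) ≤ (1 + A) ^ 2 * (ω i) ^ 2 := by positivity
  calc ∫ s in (0:ℝ)..T, (∑ j ∈ Finset.Icc r1 r2, θ i j * f j s) ^ 2
      ≤ C * (M 0 - M T) := by rw [← hCD]; exact hmono
    _ ≤ C * M 0 := by
        apply mul_le_mul_of_nonneg_left _ hC_nonneg
        linarith
    _ ≤ ((1 + A) ^ 2 * (ω i) ^ 2 * (Real.sqrt r1)⁻¹) * (∑' k : ℕ, (k : ℝ) * fin k) := by
        rw [hCdef]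
        apply mul_le_mul _ hM0_le hM0_nonneg (by positivity)
        exact mul_le_mul_of_nonneg_left hinv_le hB
    _ ≤ 2 * (1 + A) ^ 2 * (ω i) ^ 2 * (Real.sqrt r1)⁻¹ * ∑' i : ℕ, (i : ℝ) * fin i := by
        nlinarith [mul_nonneg (mul_nonneg hB (le_of_lt (inv_pos.mpr hsqrt_pos))) htsum0]
end
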